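/- arXiv:1704.06636 — 6 statements merged into one kernel-verified Lean document; each statement's English description precedes it below -/
import Mathlib

section
/- For every positive integer n, let D_odd^+(n) be the number of partitions of n into an even number of distinct parts with smallest part odd, and D_odd^-(n) the number of partitions of n into an odd number of distinct parts with smallest part odd. Then D_odd^+(n) − D_odd^-(n) equals 0 if n is not a perfect square, equals 1 if n is an even perfect square, and equals −1 if n is an odd perfect square. -/
open scoped Classical
open Finset

namespace Stmt3Aux

lemma exists_not_mem (s : Finset ℕ) : ∃ k, 2*k+1 ∉ s := by
  refine ⟨s.sup id, fun h => ?_⟩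
  have := Finset.le_sup (f := id) h
  simp only [id] at this
  omega

noncomputable def aOf (s : Finset ℕ) : ℕ := Nat.find (exists_not_mem s)

lemma aOf_spec (s : Finset ℕ) : 2*(aOf s)+1 ∉ s := Nat.find_spec (exists_not_mem s)

lemma aOf_mem {s : Finset ℕ} {i : ℕ} (h : i < aOf s) : 2*i+1 ∈ s := by
  have := Nat.find_min (exists_not_mem s) h
  simpa using this

lemma aOf_eq {s : Finset ℕ} {a : ℕ} (h1 : ∀ i < a, 2*i+1 ∈ s) (h2 : 2*a+1 ∉ s) :
    aOf s = a := by
  refine le_antisymm (Nat.find_le h2) ?_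
  by_contra h
  exact aOf_spec s (h1 _ (by omega))

def splitF (s : Finset ℕ) (a o : ℕ) : Finset ℕ :=
  insert (2*a+1) (insert (o - (2*a+1)) (s.erase o))

def mergeF (s : Finset ℕ) (a e : ℕ) : Finset ℕ :=
  insert (e + (2*a-1)) ((s.erase e).erase (2*a-1))

structure SplitHyp (s : Finset ℕ) (a o : ℕ) : Prop where
  h0 : 0 ∉ s
  ha1 : ∀ i < a, 2*i+1 ∈ s
  ha2 : 2*a+1 ∉ s
  ho : o ∈ s
  hodd : o % 2 = 1
  hgt : 2*a+1 < o
  homin : ∀ x ∈ s, x % 2 = 1 → 2*a+1 < x → o ≤ x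
  hoe : ∀ x ∈ s, x % 2 = 0 → o < x + 2*a+1

structure MergeHyp (s : Finset ℕ) (a e : ℕ) : Prop where
  h0 : 0 ∉ s
  ha : 1 ≤ a
  ha1 : ∀ i < a, 2*i+1 ∈ s
  ha2 : 2*a+1 ∉ s
  he : e ∈ s
  heven : e % 2 = 0
  hemin : ∀ x ∈ s, x % 2 = 0 → e ≤ x
  hoe : ∀ x ∈ s, x % 2 = 1 → 2*a+1 < x → e + 2*a+1 ≤ x

lemma mem_splitF {s : Finset ℕ} {a o x : ℕ} :
    x ∈ splitF s a o ↔ x = 2*a+1 ∨ x = o - (2*a+1) ∨ (x ≠ o ∧ x ∈ s) := by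
  simp [splitF, mem_insert, mem_erase]

lemma mem_mergeF {s : Finset ℕ} {a e x : ℕ} :
    x ∈ mergeF s a e ↔ x = e + (2*a-1) ∨ (x ≠ 2*a-1 ∧ x ≠ e ∧ x ∈ s) := by
  simp [mergeF, mem_insert, mem_erase]


section Split
variable {s : Finset ℕ} {a o : ℕ} (h : SplitHyp s a o)
include h

lemma split_oge : 2*a+3 ≤ o := by have := h.hodd; have := h.hgt; omega

lemma split_e_notmem : o - (2*a+1) ∉ s := by
  intro hc
  have he : (o - (2*a+1)) % 2 = 0 := by have := h.hodd; have := h.hgt; omega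
  have := h.hoe _ hc he
  have := h.hgt
  omega

lemma split_sum : (splitF s a o).sum id = s.sum id := by
  have h1 : (2*a+1 : ℕ) ∉ insert (o - (2*a+1)) (s.erase o) := by
    simp only [mem_insert, mem_erase]
    have := h.hgt; have := h.hodd
    push_neg
    exact ⟨by omega, fun hne => h.ha2⟩
  have h2 : o - (2*a+1) ∉ s.erase o := fun hc => split_e_notmem h (mem_of_mem_erase hc)
  rw [splitF, Finset.sum_insert h1, Finset.sum_insert h2]
  have h3 := Finset.add_sum_erase s id h.ho
  have := h.hgt
  simp only [id] at h3 ⊢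
  omega

lemma split_card : (splitF s a o).card = s.card + 1 := by
  have h1 : (2*a+1 : ℕ) ∉ insert (o - (2*a+1)) (s.erase o) := by
    simp only [mem_insert, mem_erase]
    have := h.hgt; have := h.hodd
    push_neg
    exact ⟨by omega, fun hne => h.ha2⟩
  have h2 : o - (2*a+1) ∉ s.erase o := fun hc => split_e_notmem h (mem_of_mem_erase hc)
  rw [splitF, Finset.card_insert_of_notMem h1, Finset.card_insert_of_notMem h2,
    Finset.card_erase_of_mem h.ho]
  have : 1 ≤ s.card := Finset.card_pos.mpr ⟨o, h.ho⟩
  omega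

lemma split_zero : 0 ∉ splitF s a o := by
  rw [mem_splitF]
  push_neg
  have := split_oge h
  exact ⟨by omega, by omega, fun _ => h.h0⟩

lemma split_stair1 : ∀ i < a+1, 2*i+1 ∈ splitF s a o := by
  intro i hi
  rw [mem_splitF]
  rcases Nat.lt_or_ge i a with hia | hia
  · right; right
    exact ⟨by have := h.hgt; omega, h.ha1 i hia⟩
  · left; omega

lemma split_stair2 : 2*(a+1)+1 ∉ splitF s a o := by
  rw [mem_splitF]
  push_neg
  have hge := split_oge h
  refine ⟨by omega, by have := h.hodd; omega, fun hne hmem => ?_⟩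
  have := h.homin _ hmem (by omega) (by omega)
  omega

lemma split_mergeHyp : MergeHyp (splitF s a o) (a+1) (o - (2*a+1)) where
  h0 := split_zero h
  ha := by omega
  ha1 := split_stair1 h
  ha2 := split_stair2 h
  he := by rw [mem_splitF]; right; left; rfl
  heven := by have := h.hodd; have := h.hgt; omega
  hemin := by
    intro x hx hxe
    rw [mem_splitF] at hx
    rcases hx with hx | hx | ⟨hxo, hxs⟩
    · omega
    · omega
    · have := h.hoe _ hxs hxe
      omega
  hoe := by
    intro x hx hxo hxgt
    rw [mem_splitF] at hx
    have hge := split_oge h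
    have := h.hodd
    rcases hx with hx | hx | ⟨hxne, hxs⟩
    · omega
    · omega
    · have := h.homin _ hxs hxo (by omega)
      have := h.hodd
      omega

lemma split_merge_inv : mergeF (splitF s a o) (a+1) (o - (2*a+1)) = s := by
  have hge := split_oge h
  have he : o - (2*a+1) + (2*(a+1)-1) = o := by omega
  ext x
  rw [mem_mergeF, mem_splitF]
  constructor
  · rintro (hx | ⟨h1, h2, (h3 | h3 | ⟨h3, h4⟩)⟩)
    · rw [he] at hx; subst hx; exact h.ho
    · omega
    · omega
    · exact h4
  · intro hxs
    by_cases hxo : x = o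
    · left; omega
    · right
      refine ⟨?_, ?_, Or.inr (Or.inr ⟨hxo, hxs⟩)⟩
      · intro hc; rw [hc] at hxs; exact h.ha2 (by rwa [show 2*(a+1)-1 = 2*a+1 by omega] at hxs)
      · intro hc; rw [hc] at hxs; exact split_e_notmem h hxs

lemma split_min_odd : ∃ m ∈ splitF s a o, m % 2 = 1 ∧ ∀ x ∈ splitF s a o, m ≤ x := by
  refine ⟨1, ?_, by omega, fun x hx => ?_⟩
  · rcases Nat.eq_zero_or_pos a with ha | ha
    · rw [mem_splitF]; left; omega
    · rw [mem_splitF]; right; right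
      exact ⟨by have := h.hgt; omega, by have := h.ha1 0 ha; simpa using this⟩
  · have := split_zero h
    rcases Nat.eq_zero_or_pos x with hx0 | hx0
    · subst hx0; exact absurd hx this
    · omega

end Split


section Merge
variable {s : Finset ℕ} {a e : ℕ} (h : MergeHyp s a e)
include h

lemma merge_ege : 2 ≤ e := by
  have h2 := h.heven
  rcases Nat.eq_zero_or_pos e with h0 | h0
  · exact absurd (h0 ▸ h.he) h.h0
  · omega

lemma merge_stair_mem : 2*a-1 ∈ s := by
  have := h.ha1 (a-1) (by have := h.ha; omega)
  have heq : 2*(a-1)+1 = 2*a-1 := by have := h.ha; omega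
  rwa [heq] at this

lemma merge_r_notmem : e + (2*a-1) ∉ s := by
  intro hc
  have hge := merge_ege h
  have ha := h.ha
  have hodd : (e + (2*a-1)) % 2 = 1 := by have := h.heven; omega
  rcases Nat.lt_trichotomy (e + (2*a-1)) (2*a+1) with hl | hl | hl
  · omega
  · exact h.ha2 (hl ▸ hc)
  · have := h.hoe _ hc hodd hl
    omega

lemma merge_sum : (mergeF s a e).sum id = s.sum id := by
  have hge := merge_ege h
  have ha := h.ha
  have hne : (2*a-1 : ℕ) ≠ e := by have := h.heven; omega
  have hm2 : 2*a-1 ∈ s.erase e := Finset.mem_erase.mpr ⟨hne, merge_stair_mem h⟩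
  have h1 : e + (2*a-1) ∉ (s.erase e).erase (2*a-1) := fun hc =>
    merge_r_notmem h (mem_of_mem_erase (mem_of_mem_erase hc))
  rw [mergeF, Finset.sum_insert h1]
  have h3 := Finset.add_sum_erase (s.erase e) id hm2
  have h4 := Finset.add_sum_erase s id h.he
  simp only [id] at h3 h4 ⊢
  omega

lemma merge_card : (mergeF s a e).card + 1 = s.card := by
  have hge := merge_ege h
  have ha := h.ha
  have hne : (2*a-1 : ℕ) ≠ e := by have := h.heven; omega
  have hm2 : 2*a-1 ∈ s.erase e := Finset.mem_erase.mpr ⟨hne, merge_stair_mem h⟩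
  have h1 : e + (2*a-1) ∉ (s.erase e).erase (2*a-1) := fun hc =>
    merge_r_notmem h (mem_of_mem_erase (mem_of_mem_erase hc))
  rw [mergeF, Finset.card_insert_of_notMem h1, Finset.card_erase_of_mem hm2,
    Finset.card_erase_of_mem h.he]
  have : 2 ≤ s.card := by
    have := Finset.card_le_card (Finset.insert_subset h.he
      (Finset.singleton_subset_iff.mpr (merge_stair_mem h)))
    rwa [Finset.card_insert_of_notMem (by simpa using hne.symm), Finset.card_singleton] at this
  omega

lemma merge_zero : 0 ∉ mergeF s a e := by
  rw [mem_mergeF]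
  push_neg
  have := merge_ege h
  exact ⟨by omega, fun _ _ => h.h0⟩

lemma merge_stair1 : ∀ i < a-1, 2*i+1 ∈ mergeF s a e := by
  intro i hi
  rw [mem_mergeF]
  right
  have ha := h.ha
  refine ⟨by omega, by have := h.heven; omega, h.ha1 i (by omega)⟩

lemma merge_stair2 : 2*(a-1)+1 ∉ mergeF s a e := by
  rw [mem_mergeF]
  push_neg
  have ha := h.ha
  have hge := merge_ege h
  exact ⟨by omega, fun hc => absurd hc (by omega)⟩

lemma merge_splitHyp : SplitHyp (mergeF s a e) (a-1) (e + (2*a-1)) where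
  h0 := merge_zero h
  ha1 := merge_stair1 h
  ha2 := merge_stair2 h
  ho := by rw [mem_mergeF]; left; rfl
  hodd := by have := h.heven; have := h.ha; omega
  hgt := by have := merge_ege h; have := h.ha; omega
  homin := by
    intro x hx hxo hxgt
    rw [mem_mergeF] at hx
    have ha := h.ha
    have hge := merge_ege h
    rcases hx with hx | ⟨h1, h2, h3⟩
    · omega
    · rcases Nat.lt_trichotomy x (2*a+1) with hl | hl | hl
      · omega
      · exact absurd (hl ▸ h3) h.ha2
      · have := h.hoe _ h3 hxo hl
        omega
  hoe := by
    intro x hx hxe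
    rw [mem_mergeF] at hx
    have ha := h.ha
    have hge := merge_ege h
    rcases hx with hx | ⟨h1, h2, h3⟩
    · have := h.heven; omega
    · have := h.hemin _ h3 hxe
      have := h.heven
      omega

lemma merge_split_inv : splitF (mergeF s a e) (a-1) (e + (2*a-1)) = s := by
  have hge := merge_ege h
  have ha := h.ha
  have he1 : e + (2*a-1) - (2*(a-1)+1) = e := by omega
  have he2 : (2*(a-1)+1 : ℕ) = 2*a-1 := by omega
  ext x
  rw [mem_splitF, mem_mergeF]
  constructor
  · rintro (hx | hx | ⟨h1, (h2 | ⟨h2, h3, h4⟩)⟩)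
    · rw [he2] at hx; subst hx; exact merge_stair_mem h
    · rw [he1] at hx; subst hx; exact h.he
    · omega
    · exact h4
  · intro hxs
    by_cases hx1 : x = 2*a-1
    · left; omega
    · by_cases hx2 : x = e
      · right; left; omega
      · right; right
        refine ⟨fun hc => merge_r_notmem h (hc ▸ hxs), Or.inr ⟨hx1, hx2, hxs⟩⟩

lemma merge_min_odd : ∃ m ∈ mergeF s a e, m % 2 = 1 ∧ ∀ x ∈ mergeF s a e, m ≤ x := by
  have hge := merge_ege h
  have ha := h.ha
  rcases Nat.lt_or_ge 1 a with ha2 | ha2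
  · refine ⟨1, ?_, by omega, fun x hx => ?_⟩
    · rw [mem_mergeF]
      right
      exact ⟨by omega, by omega, by have := h.ha1 0 (by omega); simpa using this⟩
    · have := merge_zero h
      rcases Nat.eq_zero_or_pos x with hx0 | hx0
      · subst hx0; exact absurd hx this
      · omega
  · have ha1 : a = 1 := by omega
    subst ha1
    refine ⟨e + (2*1-1), by rw [mem_mergeF]; left; rfl, by have := h.heven; omega,
      fun x hx => ?_⟩
    rw [mem_mergeF] at hx
    rcases hx with hx | ⟨h1, h2, h3⟩
    · omega
    · rcases Nat.even_or_odd x with hxe | hxo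
      · have := h.hemin _ h3 (Nat.even_iff.mp hxe)
        omega
      · have hxo' := Nat.odd_iff.mp hxo
        rcases Nat.lt_trichotomy x (2*1+1) with hl | hl | hl
        · exfalso
          rcases Nat.eq_zero_or_pos x with h5 | h5
          · exact h.h0 (by simpa [h5] using h3)
          · omega
        · exact absurd (hl ▸ h3) h.ha2
        · have := h.hoe _ h3 hxo' hl
          omega

end Merge


noncomputable def fOp (s : Finset ℕ) : Finset ℕ :=
  let a := aOf s
  let OS := s.filter fun x => x % 2 = 1 ∧ 2*a+1 < x
  let ES := s.filter fun x => x % 2 = 0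
  if hOS : OS.Nonempty then
    if hES : ES.Nonempty then
      if OS.min' hOS < ES.min' hES + 2*a+1 then splitF s a (OS.min' hOS)
      else mergeF s a (ES.min' hES)
    else splitF s a (OS.min' hOS)
  else if hES : ES.Nonempty then mergeF s a (ES.min' hES)
  else s

lemma fOp_eq_split {s : Finset ℕ} {o : ℕ} (h : SplitHyp s (aOf s) o) :
    fOp s = splitF s (aOf s) o := by
  set a := aOf s with ha
  have hOS : (s.filter fun x => x % 2 = 1 ∧ 2*a+1 < x).Nonempty :=
    ⟨o, Finset.mem_filter.mpr ⟨h.ho, h.hodd, h.hgt⟩⟩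
  have homem : o ∈ s.filter (fun x => x % 2 = 1 ∧ 2*a+1 < x) :=
    Finset.mem_filter.mpr ⟨h.ho, h.hodd, h.hgt⟩
  have hmin : (s.filter fun x => x % 2 = 1 ∧ 2*a+1 < x).min' hOS = o := by
    refine le_antisymm (Finset.min'_le _ _ homem) ?_
    have hm := Finset.min'_mem _ hOS
    rw [Finset.mem_filter] at hm
    exact h.homin _ hm.1 hm.2.1 hm.2.2
  rw [fOp]
  simp only [← ha]
  rw [dif_pos hOS]
  by_cases hES : (s.filter fun x => x % 2 = 0).Nonempty
  · rw [dif_pos hES, hmin, if_pos, ]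
    have hm := Finset.min'_mem _ hES
    rw [Finset.mem_filter] at hm
    exact h.hoe _ hm.1 hm.2
  · rw [dif_neg hES, hmin]

lemma fOp_eq_merge {s : Finset ℕ} {e : ℕ} (h : MergeHyp s (aOf s) e) :
    fOp s = mergeF s (aOf s) e := by
  set a := aOf s with ha
  have hES : (s.filter fun x => x % 2 = 0).Nonempty :=
    ⟨e, Finset.mem_filter.mpr ⟨h.he, h.heven⟩⟩
  have hemem : e ∈ s.filter (fun x => x % 2 = 0) := Finset.mem_filter.mpr ⟨h.he, h.heven⟩
  have hmin : (s.filter fun x => x % 2 = 0).min' hES = e := by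
    refine le_antisymm (Finset.min'_le _ _ hemem) ?_
    have hm := Finset.min'_mem _ hES
    rw [Finset.mem_filter] at hm
    exact h.hemin _ hm.1 hm.2
  rw [fOp]
  simp only [← ha]
  by_cases hOS : (s.filter fun x => x % 2 = 1 ∧ 2*a+1 < x).Nonempty
  · rw [dif_pos hOS, dif_pos hES, hmin, if_neg]
    have hm := Finset.min'_mem _ hOS
    rw [Finset.mem_filter] at hm
    have := h.hoe _ hm.1 hm.2.1 hm.2.2
    omega
  · rw [dif_neg hOS, dif_pos hES, hmin]

lemma fOp_eq_self {s : Finset ℕ}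
    (hOS : ¬ (s.filter fun x => x % 2 = 1 ∧ 2*(aOf s)+1 < x).Nonempty)
    (hES : ¬ (s.filter fun x => x % 2 = 0).Nonempty) : fOp s = s := by
  rw [fOp, dif_neg hOS, dif_neg hES]

def stairF (a : ℕ) : Finset ℕ := (Finset.range a).image (fun i => 2*i+1)

lemma mem_stairF {a x : ℕ} : x ∈ stairF a ↔ ∃ i < a, x = 2*i+1 := by
  simp [stairF, eq_comm]

lemma stairF_sum (a : ℕ) : (stairF a).sum id = a*a := by
  rw [stairF, Finset.sum_image (by intro x _ y _ hxy; dsimp only at hxy; omega)]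
  simp only [id_eq]
  induction a with
  | zero => simp
  | succ b ih =>
    rw [Finset.sum_range_succ, ih]
    ring

lemma stairF_card (a : ℕ) : (stairF a).card = a := by
  rw [stairF, Finset.card_image_of_injective _
    (by intro x y hxy; dsimp only at hxy; omega), Finset.card_range]

lemma aOf_stairF (a : ℕ) : aOf (stairF a) = a := by
  refine aOf_eq (fun i hi => mem_stairF.mpr ⟨i, hi, rfl⟩) (fun hc => ?_)
  rcases mem_stairF.mp hc with ⟨i, hi, hieq⟩
  omega

lemma fOp_stairF (a : ℕ) : fOp (stairF a) = stairF a := by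
  refine fOp_eq_self ?_ ?_
  · rintro ⟨x, hx⟩
    rw [Finset.mem_filter, mem_stairF, aOf_stairF] at hx
    rcases hx with ⟨⟨i, hi, hieq⟩, _, hgt⟩
    omega
  · rintro ⟨x, hx⟩
    rw [Finset.mem_filter, mem_stairF] at hx
    rcases hx with ⟨⟨i, hi, hieq⟩, he⟩
    omega

lemma trichotomy {s : Finset ℕ} (h0 : 0 ∉ s)
    (hmin : ∃ m ∈ s, m % 2 = 1 ∧ ∀ x ∈ s, m ≤ x) :
    (s = stairF (aOf s) ∧ fOp s = s) ∨
      (∃ o, SplitHyp s (aOf s) o) ∨ (∃ e, MergeHyp s (aOf s) e) := by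
  set a := aOf s with haa
  obtain ⟨m, hm, hmo, hmle⟩ := hmin
  have hstair1 : ∀ i < a, 2*i+1 ∈ s := fun i hi => aOf_mem hi
  have hstair2 : 2*a+1 ∉ s := aOf_spec s
  by_cases hOS : (s.filter fun x => x % 2 = 1 ∧ 2*a+1 < x).Nonempty
  · right
    set o := (s.filter fun x => x % 2 = 1 ∧ 2*a+1 < x).min' hOS with hodef
    have homem := Finset.min'_mem _ hOS
    rw [Finset.mem_filter] at homem
    have homin : ∀ x ∈ s, x % 2 = 1 → 2*a+1 < x → o ≤ x := by
      intro x hx h1 h2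
      have hxmem : x ∈ s.filter (fun y => y % 2 = 1 ∧ 2*a+1 < y) :=
        Finset.mem_filter.mpr ⟨hx, h1, h2⟩
      exact Finset.min'_le _ _ hxmem
    by_cases hcond : ∀ x ∈ s, x % 2 = 0 → o < x + 2*a+1
    · refine Or.inl ⟨o, ?_⟩
      exact ⟨h0, hstair1, hstair2, homem.1, homem.2.1, homem.2.2, homin, hcond⟩
    · right
      push_neg at hcond
      obtain ⟨x0, hx0, hx0e, hx0le⟩ := hcond
      have hES : (s.filter fun x => x % 2 = 0).Nonempty :=
        ⟨x0, Finset.mem_filter.mpr ⟨hx0, hx0e⟩⟩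
      set e := (s.filter fun x => x % 2 = 0).min' hES with hedef
      have hemem := Finset.min'_mem _ hES
      rw [Finset.mem_filter] at hemem
      have hemin : ∀ x ∈ s, x % 2 = 0 → e ≤ x := by
        intro x hx h1
        have hxmem : x ∈ s.filter (fun y => y % 2 = 0) := Finset.mem_filter.mpr ⟨hx, h1⟩
        exact Finset.min'_le _ _ hxmem
      have hex0 : e ≤ x0 := hemin _ hx0 hx0e
      have ha : 1 ≤ a := by
        by_contra hc
        have ha0 : a = 0 := by omega
        have hm1 : m ≠ 1 := by
          intro h1; rw [h1] at hm
          exact hstair2 (by rwa [ha0])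
        have hmOS : 2*a+1 < m := by omega
        have := homin _ hm hmo hmOS
        have := hmle _ hx0
        omega
      refine ⟨e, ?_⟩
      refine ⟨h0, ha, hstair1, hstair2, hemem.1, hemem.2, hemin, ?_⟩
      intro x hx h1 h2
      have := homin _ hx h1 h2
      omega
  · by_cases hES : (s.filter fun x => x % 2 = 0).Nonempty
    · right; right
      set e := (s.filter fun x => x % 2 = 0).min' hES with hedef
      have hemem := Finset.min'_mem _ hES
      rw [Finset.mem_filter] at hemem
      have hemin : ∀ x ∈ s, x % 2 = 0 → e ≤ x := by
        intro x hx h1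
        have hxmem : x ∈ s.filter (fun y => y % 2 = 0) := Finset.mem_filter.mpr ⟨hx, h1⟩
        exact Finset.min'_le _ _ hxmem
      have hOSe : ∀ x ∈ s, x % 2 = 1 → ¬ (2*a+1 < x) := by
        intro x hx h1 h2
        exact hOS ⟨x, Finset.mem_filter.mpr ⟨hx, h1, h2⟩⟩
      have ha : 1 ≤ a := by
        by_contra hc
        have ha0 : a = 0 := by omega
        have hm1 : m ≠ 1 := by
          intro h1; rw [h1] at hm
          exact hstair2 (by rwa [ha0])
        exact hOSe _ hm hmo (by omega)
      refine ⟨e, ?_⟩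
      exact ⟨h0, ha, hstair1, hstair2, hemem.1, hemem.2, hemin,
        fun x hx h1 h2 => absurd h2 (hOSe _ hx h1)⟩
    · left
      have hs : s = stairF a := by
        ext x
        rw [mem_stairF]
        constructor
        · intro hx
          have hxo : x % 2 = 1 := by
            by_contra hc
            have hxmem : x ∈ s.filter (fun y => y % 2 = 0) :=
              Finset.mem_filter.mpr ⟨hx, by omega⟩
            exact hES ⟨x, hxmem⟩
          have hxle : ¬ (2*a+1 < x) := fun hc =>
            hOS ⟨x, Finset.mem_filter.mpr ⟨hx, hxo, hc⟩⟩
          have hxne : x ≠ 2*a+1 := fun hc => hstair2 (hc ▸ hx)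
          exact ⟨x/2, by omega, by omega⟩
        · rintro ⟨i, hi, rfl⟩
          exact hstair1 i hi
      rw [haa] at hOS hs
      exact ⟨hs, fOp_eq_self hOS hES⟩


lemma key {s : Finset ℕ} (h0 : 0 ∉ s)
    (hmin : ∃ m ∈ s, m % 2 = 1 ∧ ∀ x ∈ s, m ≤ x) (hne : fOp s ≠ s) :
    (fOp s).sum id = s.sum id ∧ 0 ∉ fOp s ∧
      (∃ m ∈ fOp s, m % 2 = 1 ∧ ∀ x ∈ fOp s, m ≤ x) ∧
      ((fOp s).card = s.card + 1 ∨ s.card = (fOp s).card + 1) ∧ fOp (fOp s) = s := by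
  rcases trichotomy h0 hmin with ⟨_, hfix⟩ | ⟨o, h⟩ | ⟨e, h⟩
  · exact absurd hfix hne
  · have heq := fOp_eq_split h
    have hm := split_mergeHyp h
    have haOf : aOf (splitF s (aOf s) o) = aOf s + 1 := aOf_eq hm.ha1 hm.ha2
    have h2 : fOp (splitF s (aOf s) o) = s := by
      rw [fOp_eq_merge (by rwa [haOf]), haOf]
      exact split_merge_inv h
    rw [heq]
    exact ⟨split_sum h, split_zero h, split_min_odd h, Or.inl (split_card h), h2⟩
  · have heq := fOp_eq_merge h
    have hm := merge_splitHyp h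
    have haOf : aOf (mergeF s (aOf s) e) = aOf s - 1 := aOf_eq hm.ha1 hm.ha2
    have h2 : fOp (mergeF s (aOf s) e) = s := by
      rw [fOp_eq_split (by rwa [haOf]), haOf]
      exact merge_split_inv h
    rw [heq]
    exact ⟨merge_sum h, merge_zero h, merge_min_odd h, Or.inr (merge_card h).symm, h2⟩

lemma fixed_eq_stair {s : Finset ℕ} (h0 : 0 ∉ s)
    (hmin : ∃ m ∈ s, m % 2 = 1 ∧ ∀ x ∈ s, m ≤ x) (hfix : fOp s = s) :
    s = stairF (aOf s) := by
  rcases trichotomy h0 hmin with ⟨hs, _⟩ | ⟨o, h⟩ | ⟨e, h⟩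
  · exact hs
  · exfalso
    have heq := fOp_eq_split h
    have := split_card h
    rw [← heq, hfix] at this
    omega
  · exfalso
    have heq := fOp_eq_merge h
    have := merge_card h
    rw [← heq, hfix] at this
    omega

lemma stairF_min_odd {a : ℕ} (ha : 1 ≤ a) :
    ∃ m ∈ stairF a, m % 2 = 1 ∧ ∀ x ∈ stairF a, m ≤ x := by
  refine ⟨1, mem_stairF.mpr ⟨0, by omega, by omega⟩, by omega, fun x hx => ?_⟩
  rcases mem_stairF.mp hx with ⟨i, hi, rfl⟩
  omega

lemma stairF_zero (a : ℕ) : 0 ∉ stairF a := by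
  intro hc
  rcases mem_stairF.mp hc with ⟨i, hi, h⟩
  omega


noncomputable def TT (n : ℕ) (q : ℕ → Prop) : Finset (Finset ℕ) :=
  ((Finset.range (n+1)).powerset).filter
    (fun s => (s.sum id = n ∧ ∃ m ∈ s, Odd m ∧ ∀ x ∈ s, m ≤ x) ∧ q s.card)

lemma mem_TT {n : ℕ} {q : ℕ → Prop} {s : Finset ℕ} :
    s ∈ TT n q ↔ s ⊆ Finset.range (n+1) ∧
      (s.sum id = n ∧ ∃ m ∈ s, Odd m ∧ ∀ x ∈ s, m ≤ x) ∧ q s.card := by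
  rw [TT, Finset.mem_filter, Finset.mem_powerset]

lemma nodup_sum_toFinset {m : Multiset ℕ} (h : m.Nodup) : m.toFinset.sum id = m.sum := by
  simp [Finset.sum, Multiset.toFinset, Multiset.dedup_eq_self.mpr h]

lemma card_partition_eq (n : ℕ) (q : ℕ → Prop) :
    (Finset.univ.filter fun l : n.Partition =>
        l.parts.Nodup ∧ q (Multiset.card l.parts) ∧
          ∃ s ∈ l.parts, Odd s ∧ ∀ x ∈ l.parts, s ≤ x).card = (TT n q).card := by
  refine Finset.card_bij (fun l _ => l.parts.toFinset) ?_ ?_ ?_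
  · rintro l hl
    rw [Finset.mem_filter] at hl
    obtain ⟨-, hnd, hq, m0, hm0, hodd, hle⟩ := hl
    rw [mem_TT]
    refine ⟨?_, ⟨?_, ⟨m0, Multiset.mem_toFinset.mpr hm0, hodd,
      fun x hx => hle x (Multiset.mem_toFinset.mp hx)⟩⟩, ?_⟩
    · intro x hx
      rw [Multiset.mem_toFinset] at hx
      have := Multiset.single_le_sum (fun y _ => Nat.zero_le y) x hx
      rw [l.parts_sum] at this
      rw [Finset.mem_range]
      omega
    · rw [nodup_sum_toFinset hnd, l.parts_sum]
    · rwa [Multiset.toFinset_card_of_nodup hnd]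
  · rintro l1 hl1 l2 hl2 heq
    rw [Finset.mem_filter] at hl1 hl2
    have h1 := congrArg Finset.val heq
    rw [Multiset.toFinset_val, Multiset.toFinset_val,
      Multiset.dedup_eq_self.mpr hl1.2.1, Multiset.dedup_eq_self.mpr hl2.2.1] at h1
    exact Nat.Partition.ext h1
  · rintro t ht
    rw [mem_TT] at ht
    obtain ⟨hsub, ⟨hsum, m0, hm0, hodd, hle⟩, hq⟩ := ht
    have hpos : ∀ {i : ℕ}, i ∈ t.val → 0 < i := by
      intro i hi
      have := hle i hi
      have : 1 ≤ m0 := hodd.pos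
      omega
    have hsum' : t.val.sum = n := by
      rw [← hsum, Finset.sum, Multiset.map_id]
    refine ⟨⟨t.val, hpos, hsum'⟩, ?_, ?_⟩
    · rw [Finset.mem_filter]
      exact ⟨Finset.mem_univ _, t.nodup, hq, m0, hm0, hodd, hle⟩
    · exact Finset.val_toFinset t

lemma step {n : ℕ} {s : Finset ℕ} (hsum : s.sum id = n)
    (hmin : ∃ m ∈ s, Odd m ∧ ∀ x ∈ s, m ≤ x) (hne : fOp s ≠ s) :
    (fOp s ⊆ Finset.range (n+1) ∧ (fOp s).sum id = n ∧
      (∃ m ∈ fOp s, Odd m ∧ ∀ x ∈ fOp s, m ≤ x)) ∧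
      ((fOp s).card = s.card + 1 ∨ s.card = (fOp s).card + 1) ∧
      fOp (fOp s) = s ∧ fOp (fOp s) ≠ fOp s := by
  obtain ⟨m0, hm0, hodd, hle⟩ := hmin
  have h0 : 0 ∉ s := by
    intro hc
    have := hle 0 hc
    have := Nat.odd_iff.mp hodd
    omega
  have hmin' : ∃ m ∈ s, m % 2 = 1 ∧ ∀ x ∈ s, m ≤ x :=
    ⟨m0, hm0, Nat.odd_iff.mp hodd, hle⟩
  obtain ⟨ksum, kzero, kmin, kcard, kinv⟩ := key h0 hmin' hne
  obtain ⟨m1, hm1, hmo1, hle1⟩ := kmin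
  refine ⟨⟨?_, by rw [ksum, hsum], ⟨m1, hm1, Nat.odd_iff.mpr hmo1, hle1⟩⟩, kcard, kinv, ?_⟩
  · intro x hx
    have := Finset.single_le_sum (f := id) (fun i _ => Nat.zero_le i) hx
    rw [ksum, hsum] at this
    rw [Finset.mem_range]
    simpa using Nat.lt_succ_of_le this
  · intro hc
    rw [kinv] at hc
    exact hne hc.symm

lemma TT_pair (n : ℕ) :
    ((TT n (fun k => Even k)).filter (fun s => fOp s ≠ s)).card =
      ((TT n (fun k => Odd k)).filter (fun s => fOp s ≠ s)).card := by
  refine Finset.card_bij' (fun s _ => fOp s) (fun s _ => fOp s) ?_ ?_ ?_ ?_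
  · rintro s hs
    rw [Finset.mem_filter, mem_TT] at hs
    obtain ⟨⟨hsub, ⟨hsum, hmin⟩, hq⟩, hne⟩ := hs
    obtain ⟨⟨hsub', hsum', hmin'⟩, hcard, hinv, hne'⟩ := step hsum hmin hne
    rw [Finset.mem_filter, mem_TT]
    refine ⟨⟨hsub', ⟨hsum', hmin'⟩, ?_⟩, hne'⟩
    show Odd (fOp s).card
    rw [Nat.odd_iff]
    rw [Nat.even_iff] at hq
    omega
  · rintro s hs
    rw [Finset.mem_filter, mem_TT] at hs
    obtain ⟨⟨hsub, ⟨hsum, hmin⟩, hq⟩, hne⟩ := hs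
    obtain ⟨⟨hsub', hsum', hmin'⟩, hcard, hinv, hne'⟩ := step hsum hmin hne
    rw [Finset.mem_filter, mem_TT]
    refine ⟨⟨hsub', ⟨hsum', hmin'⟩, ?_⟩, hne'⟩
    show Even (fOp s).card
    rw [Nat.even_iff]
    rw [Nat.odd_iff] at hq
    omega
  · rintro s hs
    rw [Finset.mem_filter, mem_TT] at hs
    obtain ⟨⟨hsub, ⟨hsum, hmin⟩, hq⟩, hne⟩ := hs
    exact (step hsum hmin hne).2.2.1
  · rintro s hs
    rw [Finset.mem_filter, mem_TT] at hs
    obtain ⟨⟨hsub, ⟨hsum, hmin⟩, hq⟩, hne⟩ := hs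
    exact (step hsum hmin hne).2.2.1

lemma two_mul_le_sq {a : ℕ} (ha : 1 ≤ a) : 2*a ≤ a*a + 1 := by
  rcases a with _ | b
  · omega
  · have : b * b ≥ 0 := Nat.zero_le _
    nlinarith

lemma fix_card (n : ℕ) (hn : 0 < n) (q : ℕ → Prop) :
    ((TT n q).filter (fun s => ¬ fOp s ≠ s)).card =
      if ∃ a, n = a * a ∧ q a then 1 else 0 := by
  split_ifs with hsq
  · obtain ⟨a, ha, hqa⟩ := hsq
    have ha1 : 1 ≤ a := by
      rcases Nat.eq_zero_or_pos a with h | h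
      · subst h; omega
      · exact h
    rw [Finset.card_eq_one]
    refine ⟨stairF a, ?_⟩
    ext s
    simp only [Finset.mem_filter, Finset.mem_singleton, not_not]
    constructor
    · rintro ⟨hsT, hfix⟩
      rw [mem_TT] at hsT
      obtain ⟨hsub, ⟨hsum, m0, hm0, hodd, hle⟩, hq⟩ := hsT
      have h0 : 0 ∉ s := by
        intro hc
        have := hle 0 hc
        have := Nat.odd_iff.mp hodd
        omega
      have hs := fixed_eq_stair h0 ⟨m0, hm0, Nat.odd_iff.mp hodd, hle⟩ hfix
      have hsum2 : aOf s * aOf s = n := by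
        rw [← stairF_sum (aOf s), ← hs]
        exact hsum
      have : aOf s = a := by
        have := Nat.mul_self_inj.mp (by omega : aOf s * aOf s = a * a)
        exact this
      rw [hs, this]
    · rintro rfl
      refine ⟨?_, fOp_stairF a⟩
      rw [mem_TT]
      refine ⟨?_, ⟨by rw [stairF_sum]; omega, ?_⟩, by rwa [stairF_card]⟩
      · intro x hx
        rcases mem_stairF.mp hx with ⟨i, hi, rfl⟩
        rw [Finset.mem_range]
        have := two_mul_le_sq ha1
        omega
      · obtain ⟨m, hm, hmo, hle⟩ := stairF_min_odd ha1
        exact ⟨m, hm, Nat.odd_iff.mpr hmo, hle⟩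
  · rw [Finset.card_eq_zero, Finset.filter_eq_empty_iff]
    rintro s hsT
    simp only [not_not]
    intro hfix
    rw [mem_TT] at hsT
    obtain ⟨hsub, ⟨hsum, m0, hm0, hodd, hle⟩, hq⟩ := hsT
    have h0 : 0 ∉ s := by
      intro hc
      have := hle 0 hc
      have := Nat.odd_iff.mp hodd
      omega
    have hs := fixed_eq_stair h0 ⟨m0, hm0, Nat.odd_iff.mp hodd, hle⟩ hfix
    refine hsq ⟨aOf s, ?_, ?_⟩
    · rw [← hsum, ← stairF_sum (aOf s), ← hs]
    · rw [hs, stairF_card] at hq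
      exact hq

end Stmt3Aux


open Stmt3Aux

/-- `D⁺_odd(n) - D⁻_odd(n)` equals `0` if `n` is not a square, `1` if `n` is an even
square, and `-1` if `n` is an odd square.  Here `D⁺_odd(n)` (resp. `D⁻_odd(n)`) counts
partitions of `n` into an even (resp. odd) number of distinct parts whose smallest part
is odd. -/
theorem stmt3 (n : ℕ) (hn : 0 < n) :
    ((Finset.univ.filter fun l : n.Partition =>
        l.parts.Nodup ∧ Even (Multiset.card l.parts) ∧
          ∃ s ∈ l.parts, Odd s ∧ ∀ x ∈ l.parts, s ≤ x).card : ℤ) -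
      ((Finset.univ.filter fun l : n.Partition =>
        l.parts.Nodup ∧ Odd (Multiset.card l.parts) ∧
          ∃ s ∈ l.parts, Odd s ∧ ∀ x ∈ l.parts, s ≤ x).card : ℤ) =
    if IsSquare n then (if Even n then 1 else -1) else 0 := by

  have e1 : (Finset.univ.filter fun l : n.Partition =>
      l.parts.Nodup ∧ Even (Multiset.card l.parts) ∧
        ∃ s ∈ l.parts, Odd s ∧ ∀ x ∈ l.parts, s ≤ x).card
      = (TT n (fun k => Even k)).card := by
    have h := card_partition_eq n (fun k => Even k)
    convert h using 3
  have e2 : (Finset.univ.filter fun l : n.Partition =>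
      l.parts.Nodup ∧ Odd (Multiset.card l.parts) ∧
        ∃ s ∈ l.parts, Odd s ∧ ∀ x ∈ l.parts, s ≤ x).card
      = (TT n (fun k => Odd k)).card := by
    have h := card_partition_eq n (fun k => Odd k)
    convert h using 3
  rw [e1, e2]
  have hsE := Finset.card_filter_add_card_filter_not
    (s := TT n (fun k => Even k)) (p := fun s => fOp s ≠ s)
  have hsO := Finset.card_filter_add_card_filter_not
    (s := TT n (fun k => Odd k)) (p := fun s => fOp s ≠ s)
  have hpair := TT_pair n
  have hfE := fix_card n hn (fun k => Even k)
  have hfO := fix_card n hn (fun k => Odd k)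
  by_cases hsq : IsSquare n
  · obtain ⟨r, hr⟩ := id hsq
    have hr1 : 1 ≤ r := by
      rcases Nat.eq_zero_or_pos r with h | h
      · subst h; omega
      · exact h
    by_cases hev : Even n
    · have hevr : Even r := by
        rcases Nat.even_mul.mp (by rwa [hr] at hev) with h | h <;> exact h
      have h1 : (∃ a, n = a * a ∧ Even a) := ⟨r, hr, hevr⟩
      have h2 : ¬ (∃ a, n = a * a ∧ Odd a) := by
        rintro ⟨a, ha, hao⟩
        have : a = r := Nat.mul_self_inj.mp (by omega)
        subst this
        exact (Nat.not_odd_iff_even.mpr hevr) hao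
      rw [if_pos hsq, if_pos hev]
      rw [if_pos h1] at hfE
      rw [if_neg h2] at hfO
      omega
    · have hodr : ¬ Even r := by
        intro h
        exact hev (by rw [hr]; exact h.mul_left r)
      have h1 : ¬ (∃ a, n = a * a ∧ Even a) := by
        rintro ⟨a, ha, hae⟩
        have : a = r := Nat.mul_self_inj.mp (by omega)
        subst this
        exact hodr hae
      have h2 : (∃ a, n = a * a ∧ Odd a) := ⟨r, hr, Nat.not_even_iff_odd.mp hodr⟩
      rw [if_pos hsq, if_neg hev]
      rw [if_neg h1] at hfE
      rw [if_pos h2] at hfO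
      omega
  · have h1 : ¬ (∃ a, n = a * a ∧ Even a) := by
      rintro ⟨a, ha, -⟩
      exact hsq ⟨a, ha⟩
    have h2 : ¬ (∃ a, n = a * a ∧ Odd a) := by
      rintro ⟨a, ha, -⟩
      exact hsq ⟨a, ha⟩
    rw [if_neg hsq]
    rw [if_neg h1] at hfE
    rw [if_neg h2] at hfO
    omega
end

section
/- (q-Binomial Theorem) For complex numbers a, z, q with |q| < 1 and |z| < 1, one has ∏_{m=0}^∞ (1 − a z q^m) / ∏_{m=0}^∞ (1 − z q^m) = ∑_{n=0}^∞ [∏_{j=0}^{n−1}(1 − a q^j) / ∏_{j=1}^{n}(1 − q^j)] · z^n. -/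
open Complex Filter Finset Topology

lemma one_sub_ne_zero_of_norm_lt_one {x : ℂ} (h : ‖x‖ < 1) : 1 - x ≠ 0 := by
  intro h0; rw [sub_eq_zero] at h0; rw [← h0] at h; simp at h

lemma aux_summable_log (w : ℕ → ℂ) (hw : Summable fun n => ‖w n‖) :
    Summable fun n => Complex.log (1 + w n) := by
  have h0 : Tendsto (fun n => ‖w n‖) atTop (𝓝 0) := hw.tendsto_atTop_zero
  refine Summable.of_norm_bounded_eventually_nat (hw.mul_left (3/2)) ?_
  filter_upwards [h0.eventually_lt_const (by norm_num : (0:ℝ) < 1/2)] with n hn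
  exact Complex.norm_log_one_add_half_le_self hn.le

lemma aux_hasProd_exp (f : ℕ → ℂ) (h0 : ∀ n, f n ≠ 0)
    (hs : Summable fun n => Complex.log (f n)) :
    HasProd f (Complex.exp (∑' n, Complex.log (f n))) := by
  have he : (Complex.exp ∘ fun n => Complex.log (f n)) = f :=
    funext fun n => Complex.exp_log (h0 n)
  simpa [he] using hs.hasSum.cexp

lemma aux_hasProd_zero (f : ℕ → ℂ) (m : ℕ) (hm : f m = 0) : HasProd f 0 := by
  rw [HasProd]
  have h : ∀ᶠ s : Finset ℕ in atTop, ∏ i ∈ s, f i = 0 := by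
    filter_upwards [eventually_ge_atTop {m}] with s hs
    exact Finset.prod_eq_zero (hs (Finset.mem_singleton_self m)) hm
  exact Tendsto.congr' (h.mono fun s hs => hs.symm) tendsto_const_nhds

lemma aux_hasProd_tprod (w : ℕ → ℂ) (hw : Summable fun n => ‖w n‖) :
    HasProd (fun n => 1 + w n) (∏' n, (1 + w n)) := by
  by_cases h0 : ∀ n, 1 + w n ≠ 0
  · have hP := aux_hasProd_exp _ h0 (aux_summable_log w hw)
    exact hP.tprod_eq ▸ hP
  · push_neg at h0
    obtain ⟨m, hm⟩ := h0
    have hP := aux_hasProd_zero (fun n => 1 + w n) m hm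
    exact hP.tprod_eq ▸ hP

noncomputable def qc (a q : ℂ) (n : ℕ) : ℂ :=
  (∏ j ∈ Finset.range n, (1 - a * q ^ j)) / (∏ j ∈ Finset.range n, (1 - q ^ (j + 1)))

lemma qden_ne (q : ℂ) (hq : ‖q‖ < 1) (j : ℕ) : (1 : ℂ) - q ^ (j + 1) ≠ 0 := by
  apply one_sub_ne_zero_of_norm_lt_one
  rw [norm_pow]
  exact pow_lt_one₀ (norm_nonneg q) hq (Nat.succ_ne_zero j)

lemma qc_zero (a q : ℂ) : qc a q 0 = 1 := by simp [qc]

lemma qc_rec (a q : ℂ) (hq : ‖q‖ < 1) (n : ℕ) :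
    qc a q (n + 1) * (1 - q ^ (n + 1)) = qc a q n * (1 - a * q ^ n) := by
  have hD : ∀ m : ℕ, (∏ j ∈ Finset.range m, (1 - q ^ (j + 1))) ≠ 0 :=
    fun m => Finset.prod_ne_zero_iff.mpr fun j _ => qden_ne q hq j
  simp only [qc, Finset.prod_range_succ]
  field_simp
  rw [mul_div_mul_right _ _ (qden_ne q hq n)]

lemma qc_succ (a q : ℂ) (hq : ‖q‖ < 1) (n : ℕ) :
    qc a q (n + 1) = qc a q n * (1 - a * q ^ n) / (1 - q ^ (n + 1)) :=
  eq_div_iff (qden_ne q hq n) |>.mpr (qc_rec a q hq n)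

lemma qsummable (a q : ℂ) (hq : ‖q‖ < 1) (w : ℂ) (hw : ‖w‖ < 1) :
    Summable fun n => ‖qc a q n * w ^ n‖ := by
  set r : ℝ := (1 + ‖w‖) / 2 with hr
  have hr1 : r < 1 := by rw [hr]; linarith
  have hwr : ‖w‖ < r := by rw [hr]; linarith
  have hq0 : Tendsto (fun n : ℕ => q ^ n) atTop (𝓝 0) :=
    tendsto_pow_atTop_nhds_zero_of_norm_lt_one hq
  have hg : Tendsto (fun n : ℕ => ‖w‖ * ‖1 - a * q ^ n‖ / ‖1 - q ^ (n + 1)‖) atTop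
      (𝓝 (‖w‖ * ‖(1 : ℂ) - a * 0‖ / ‖(1 : ℂ) - 0‖)) := by
    apply Tendsto.div
    · exact ((tendsto_const_nhds.sub (tendsto_const_nhds.mul hq0)).norm).const_mul ‖w‖
    · exact (tendsto_const_nhds.sub (hq0.comp (tendsto_add_atTop_nat 1))).norm
    · simp
  simp only [mul_zero, sub_zero, norm_one, div_one, mul_one] at hg
  have hev : ∀ᶠ n in atTop, ‖w‖ * ‖1 - a * q ^ n‖ / ‖1 - q ^ (n + 1)‖ ≤ r :=
    (hg.eventually_lt_const hwr).mono fun n hn => hn.le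
  apply summable_of_ratio_norm_eventually_le hr1
  filter_upwards [hev] with n hn
  have hfn : ‖qc a q (n + 1) * w ^ (n + 1)‖
      = ‖qc a q n * w ^ n‖ * (‖w‖ * ‖1 - a * q ^ n‖ / ‖1 - q ^ (n + 1)‖) := by
    simp only [qc_succ a q hq n, pow_succ, norm_mul, norm_div]
    ring
  rw [Real.norm_of_nonneg (norm_nonneg _), Real.norm_of_nonneg (norm_nonneg _), hfn]
  calc ‖qc a q n * w ^ n‖ * (‖w‖ * ‖1 - a * q ^ n‖ / ‖1 - q ^ (n + 1)‖)
      ≤ ‖qc a q n * w ^ n‖ * r := by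
        exact mul_le_mul_of_nonneg_left hn (norm_nonneg _)
    _ = r * ‖qc a q n * w ^ n‖ := mul_comm _ _

noncomputable def qS (a q w : ℂ) : ℂ := ∑' n, qc a q n * w ^ n

lemma qfe (a q : ℂ) (hq : ‖q‖ < 1) (w : ℂ) (hw : ‖w‖ < 1) :
    (1 - w) * qS a q w = (1 - a * w) * qS a q (q * w) := by
  have hqw : ‖q * w‖ < 1 := by
    rw [norm_mul]
    nlinarith [norm_nonneg q, norm_nonneg w]
  have hsw : Summable (fun n => qc a q n * w ^ n) := (qsummable a q hq w hw).of_norm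
  have hsqw : Summable (fun n => qc a q n * (q * w) ^ n) := (qsummable a q hq _ hqw).of_norm
  set u : ℕ → ℂ := fun n => qc a q n * (1 - q ^ n) * w ^ n with hu_def
  have hu : Summable u := by
    refine (hsw.sub hsqw).congr fun n => ?_
    simp only [hu_def, mul_pow]
    ring
  have hu1 : Summable fun n => u (n + 1) := (summable_nat_add_iff 1).mpr hu
  have key : ∑' n, ((1 - w) * (qc a q n * w ^ n) - (1 - a * w) * (qc a q n * (q * w) ^ n)) = 0 := by
    have hterm : ∀ n, (1 - w) * (qc a q n * w ^ n) - (1 - a * w) * (qc a q n * (q * w) ^ n)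
        = u n - u (n + 1) := by
      intro n
      have := qc_rec a q hq n
      simp only [hu_def, mul_pow]
      rw [pow_succ w n]
      linear_combination (w ^ n * w) * this
    rw [tsum_congr hterm, Summable.tsum_sub hu hu1]
    rw [Summable.tsum_eq_zero_add hu]
    simp [hu_def]
  rw [Summable.tsum_sub (hsw.mul_left _) (hsqw.mul_left _)] at key
  rw [tsum_mul_left, tsum_mul_left] at key
  rw [qS, qS]
  rw [sub_eq_zero] at key
  exact key

lemma qiter (a q z : ℂ) (hq : ‖q‖ < 1) (hz : ‖z‖ < 1) (N : ℕ) :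
    qS a q z * ∏ m ∈ Finset.range N, (1 - z * q ^ m)
      = qS a q (q ^ N * z) * ∏ m ∈ Finset.range N, (1 - a * z * q ^ m) := by
  induction N with
  | zero => simp
  | succ N ih =>
    have h1 : ‖q ^ N * z‖ < 1 := by
      rw [norm_mul, norm_pow]
      calc ‖q‖ ^ N * ‖z‖ ≤ 1 * ‖z‖ := by
            exact mul_le_mul_of_nonneg_right (pow_le_one₀ (norm_nonneg q) hq.le) (norm_nonneg z)
        _ = ‖z‖ := one_mul _
        _ < 1 := hz
    have hfe := qfe a q hq (q ^ N * z) h1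
    rw [show q * (q ^ N * z) = q ^ (N + 1) * z by ring] at hfe
    rw [Finset.prod_range_succ, Finset.prod_range_succ, ← mul_assoc, ih]
    linear_combination (∏ m ∈ Finset.range N, (1 - a * z * q ^ m)) * hfe

set_option maxHeartbeats 800000 in
lemma qS_tendsto_one (a q z : ℂ) (hq : ‖q‖ < 1) (hz : ‖z‖ < 1) (hz0 : z ≠ 0) :
    Tendsto (fun N : ℕ => qS a q (q ^ N * z)) atTop (𝓝 1) := by
  have hzn : ‖z‖ ≠ 0 := norm_ne_zero_iff.mpr hz0
  have hs1 : Summable fun n => ‖qc a q (n + 1) * z ^ (n + 1)‖ :=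
    (summable_nat_add_iff (f := fun n => ‖qc a q n * z ^ n‖) 1).mpr (qsummable a q hq z hz)
  have hM : Summable fun n => ‖qc a q (n + 1)‖ * ‖z‖ ^ n := by
    refine (hs1.mul_right (‖z‖⁻¹)).congr fun n => ?_
    rw [norm_mul, norm_pow, pow_succ, mul_assoc, mul_assoc, mul_inv_cancel₀ hzn, mul_one]
  set M : ℝ := ∑' n, ‖qc a q (n + 1)‖ * ‖z‖ ^ n with hMdef
  have hbound : ∀ w : ℂ, ‖w‖ ≤ ‖z‖ → ‖qS a q w - 1‖ ≤ ‖w‖ * M := by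
    intro w hw
    have hw1 : ‖w‖ < 1 := lt_of_le_of_lt hw hz
    have hsw : Summable fun n => ‖qc a q n * w ^ n‖ := qsummable a q hq w hw1
    have hsw1 : Summable fun n => ‖qc a q (n + 1) * w ^ (n + 1)‖ :=
      (summable_nat_add_iff (f := fun n => ‖qc a q n * w ^ n‖) 1).mpr hsw
    have hS : qS a q w - 1 = ∑' n, qc a q (n + 1) * w ^ (n + 1) := by
      rw [qS, Summable.tsum_eq_zero_add hsw.of_norm]
      simp [qc_zero]
    rw [hS]
    calc ‖∑' n, qc a q (n + 1) * w ^ (n + 1)‖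
        ≤ ∑' n, ‖qc a q (n + 1) * w ^ (n + 1)‖ := norm_tsum_le_tsum_norm hsw1
      _ ≤ ∑' n, ‖w‖ * (‖qc a q (n + 1)‖ * ‖z‖ ^ n) := by
          refine Summable.tsum_le_tsum (fun n => ?_) hsw1 (hM.mul_left _)
          rw [norm_mul, norm_pow, pow_succ]
          calc ‖qc a q (n + 1)‖ * (‖w‖ ^ n * ‖w‖)
              ≤ ‖qc a q (n + 1)‖ * (‖z‖ ^ n * ‖w‖) := by
                refine mul_le_mul_of_nonneg_left
                  (mul_le_mul_of_nonneg_right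
                    (pow_le_pow_left₀ (norm_nonneg w) hw n) (norm_nonneg w)) (norm_nonneg _)
            _ = ‖w‖ * (‖qc a q (n + 1)‖ * ‖z‖ ^ n) := by ring
      _ = ‖w‖ * M := by rw [tsum_mul_left]
  have hMz : Tendsto (fun N : ℕ => ‖q‖ ^ N * (‖z‖ * M)) atTop (𝓝 0) := by
    simpa using (tendsto_pow_atTop_nhds_zero_of_lt_one (norm_nonneg q) hq).mul_const (‖z‖ * M)
  have hsq : Tendsto (fun N : ℕ => qS a q (q ^ N * z) - 1) atTop (𝓝 0) := by
    refine squeeze_zero_norm (fun N => ?_) hMz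
    have := hbound (q ^ N * z) (by
      rw [norm_mul, norm_pow]
      calc ‖q‖ ^ N * ‖z‖ ≤ 1 * ‖z‖ :=
            mul_le_mul_of_nonneg_right (pow_le_one₀ (norm_nonneg q) hq.le) (norm_nonneg z)
        _ = ‖z‖ := one_mul _)
    calc ‖qS a q (q ^ N * z) - 1‖ ≤ ‖q ^ N * z‖ * M := this
      _ = ‖q‖ ^ N * (‖z‖ * M) := by rw [norm_mul, norm_pow]; ring
  have := hsq.add_const 1
  simpa using this

/-- The `q`-Binomial Theorem: for `|q| < 1` and `|z| < 1`,
`(az;q)_∞ / (z;q)_∞ = ∑_{n ≥ 0} ((a;q)_n / (q;q)_n) zⁿ`. -/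
theorem stmt9 (a z q : ℂ) (hq : ‖q‖ < 1) (hz : ‖z‖ < 1) :
    (∏' m : ℕ, (1 - a * z * q ^ m)) / (∏' m : ℕ, (1 - z * q ^ m)) =
      ∑' n : ℕ, (∏ j ∈ Finset.range n, (1 - a * q ^ j)) /
        (∏ j ∈ Finset.range n, (1 - q ^ (j + 1))) * z ^ n := by
  have hrhs : (∑' n : ℕ, (∏ j ∈ Finset.range n, (1 - a * q ^ j)) /
      (∏ j ∈ Finset.range n, (1 - q ^ (j + 1))) * z ^ n) = qS a q z := rfl
  rw [hrhs]
  by_cases hz0 : z = 0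
  · subst hz0
    rw [qS]
    have h1 : (∑' n : ℕ, qc a q n * (0:ℂ) ^ n) = 1 := by
      rw [tsum_eq_single 0 (fun n hn => by simp [zero_pow hn])]
      simp [qc_zero]
    rw [h1]
    simp
  have hgeom : ∀ c : ℂ, Summable fun m : ℕ => ‖-(c * q ^ m)‖ := by
    intro c
    refine ((summable_geometric_of_lt_one (norm_nonneg q) hq).mul_left ‖c‖).congr fun m => ?_
    rw [norm_neg, norm_mul, norm_pow]
  have hnum : HasProd (fun m : ℕ => 1 - a * z * q ^ m) (∏' m : ℕ, (1 - a * z * q ^ m)) := by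
    have := aux_hasProd_tprod (fun m => -(a * z * q ^ m)) (hgeom (a * z))
    simpa [sub_eq_add_neg] using this
  have hdenne : ∀ m : ℕ, (1 : ℂ) - z * q ^ m ≠ 0 := by
    intro m
    apply one_sub_ne_zero_of_norm_lt_one
    rw [norm_mul, norm_pow]
    calc ‖z‖ * ‖q‖ ^ m ≤ ‖z‖ * 1 :=
          mul_le_mul_of_nonneg_left (pow_le_one₀ (norm_nonneg q) hq.le) (norm_nonneg z)
      _ = ‖z‖ := mul_one _
      _ < 1 := hz
  have hlog : Summable fun m => Complex.log (1 - z * q ^ m) := by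
    have := aux_summable_log (fun m => -(z * q ^ m)) (hgeom z)
    simpa [sub_eq_add_neg] using this
  have hden : HasProd (fun m : ℕ => 1 - z * q ^ m)
      (Complex.exp (∑' m, Complex.log (1 - z * q ^ m))) :=
    aux_hasProd_exp (fun m => 1 - z * q ^ m) hdenne hlog
  have hB0 : Complex.exp (∑' m, Complex.log (1 - z * q ^ m)) ≠ 0 := Complex.exp_ne_zero _
  have t1 := hden.tendsto_prod_nat
  have t2 := hnum.tendsto_prod_nat
  have t3 := qS_tendsto_one a q z hq hz hz0
  have left : Tendsto (fun N => qS a q z * ∏ m ∈ Finset.range N, (1 - z * q ^ m)) atTop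
      (𝓝 (qS a q z * Complex.exp (∑' m, Complex.log (1 - z * q ^ m)))) :=
    tendsto_const_nhds.mul t1
  have right : Tendsto (fun N => qS a q z * ∏ m ∈ Finset.range N, (1 - z * q ^ m)) atTop
      (𝓝 (1 * ∏' m : ℕ, (1 - a * z * q ^ m))) :=
    (t3.mul t2).congr fun N => (qiter a q z hq hz N).symm
  have key := tendsto_nhds_unique left right
  rw [hden.tprod_eq, div_eq_iff hB0]
  linear_combination -key
end

section
/- For every complex number q with |q| < 1, one has (∏_{n=1}^∞ (1 − q^n))^2 / ∏_{n=1}^∞ (1 − q^{2n}) = 1 + 2 ∑_{n=1}^∞ (−1)^n q^{n^2}; that is, (q;q)_∞^2 / (q^2;q^2)_∞ = 1 + 2 ∑_{n≥1} (−1)^n q^{n^2}. -/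
open Finset Filter Topology

namespace St10



noncomputable def P (q : ℂ) (m : ℕ) : ℂ := ∏ j ∈ Finset.range m, (1 - q ^ (2*j+2))
noncomputable def D (q : ℂ) (m : ℕ) : ℂ := ∏ j ∈ Finset.range m, (1 - q ^ (2*j+1))
noncomputable def b (q : ℂ) (n k : ℕ) : ℂ := P q n / (P q k * P q (n - k))

variable {q : ℂ}

lemma one_sub_ne (hq : ‖q‖ < 1) {n : ℕ} (hn : 1 ≤ n) : (1 : ℂ) - q ^ n ≠ 0 := by
  intro h
  have h1 : q ^ n = 1 := by linear_combination -h
  have : ‖q ^ n‖ < 1 := by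
    rw [norm_pow]
    exact pow_lt_one₀ (norm_nonneg q) hq (by omega)
  rw [h1] at this; simp at this

lemma Pne (hq : ‖q‖ < 1) (m : ℕ) : P q m ≠ 0 := by
  refine Finset.prod_ne_zero_iff.2 fun j _ => one_sub_ne hq (by omega)

lemma P_succ (q : ℂ) (m : ℕ) : P q (m+1) = P q m * (1 - q ^ (2*m+2)) :=
  Finset.prod_range_succ _ _

lemma P_zero (q : ℂ) : P q 0 = 1 := rfl

lemma b_zero (hq : ‖q‖ < 1) (n : ℕ) : b q n 0 = 1 := by
  simp [b, P_zero, div_self (Pne hq n)]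

lemma b_self (hq : ‖q‖ < 1) (n : ℕ) : b q n n = 1 := by
  simp [b, Nat.sub_self, P_zero, div_self (Pne hq n)]

lemma pascal (hq : ‖q‖ < 1) (a d : ℕ) :
    b q (a+d+2) (a+1) = b q (a+d+1) (a+1) + q^(2*(d+1)) * b q (a+d+1) a := by
  have e1 : a+d+2 - (a+1) = d+1 := by omega
  have e2 : a+d+1 - (a+1) = d := by omega
  have e3 : a+d+1 - a = d+1 := by omega
  rw [b, b, b, e1, e2, e3]
  rw [show a+d+2 = (a+d+1)+1 from rfl, P_succ q (a+d+1), P_succ q d, P_succ q a]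
  have h1 := Pne hq (a+d+1)
  have h2 := Pne hq a
  have h3 := Pne hq d
  have h4 : (1:ℂ) - q^(2*d+2) ≠ 0 := one_sub_ne hq (by omega)
  have h5 : (1:ℂ) - q^(2*a+2) ≠ 0 := one_sub_ne hq (by omega)
  field_simp
  ring





lemma qbin (hq : ‖q‖ < 1) (x y : ℂ) : ∀ n : ℕ,
    ∏ j ∈ range n, (y + x * q^(2*j)) =
      ∑ k ∈ range (n+1), q^(k*(k-1)) * b q n k * x^k * y^(n-k) := by
  intro n
  induction n with
  | zero => simp [b_zero hq]
  | succ n ih =>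
    rw [Finset.prod_range_succ, ih]
    have key : ∀ S : ℂ, S = ∑ k ∈ range (n+1), q^(k*(k-1)) * b q n k * x^k * y^(n-k) →
        S * (y + x * q^(2*n)) = S * y + S * (x * q^(2*n)) := by intro S _; ring
    rw [key _ rfl]
    -- expand the two sums
    rw [Finset.sum_mul, Finset.sum_mul]
    -- S*y : rewrite each term
    have h1 : ∑ k ∈ range (n+1), q^(k*(k-1)) * b q n k * x^k * y^(n-k) * y
        = ∑ k ∈ range (n+1), q^(k*(k-1)) * b q n k * x^k * y^(n+1-k) := by
      refine Finset.sum_congr rfl fun k hk => ?_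
      have hk' : k ≤ n := by simpa using Nat.lt_succ_iff.mp (Finset.mem_range.mp hk)
      rw [show n+1-k = (n-k)+1 by omega, pow_succ]; ring
    rw [h1]
    -- target: peel via sum_range_succ'
    rw [Finset.sum_range_succ' (fun k => q^(k*(k-1)) * b q (n+1) k * x^k * y^(n+1-k)) (n+1)]
    rw [Finset.sum_range_succ (fun i => q^((i+1)*(i+1-1)) * b q (n+1) (i+1) * x^(i+1) * y^(n+1-(i+1))) n]
    rw [Finset.sum_range_succ' (fun k => q^(k*(k-1)) * b q n k * x^k * y^(n+1-k)) n]
    rw [Finset.sum_range_succ (fun k => q^(k*(k-1)) * b q n k * x^k * y^(n-k) * (x * q^(2*n))) n]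
    simp only [b_zero hq, b_self hq]
    have hmid : ∀ i ∈ range n,
        q^((i+1)*(i+1-1)) * b q (n+1) (i+1) * x^(i+1) * y^(n+1-(i+1)) =
        q^((i+1)*(i+1-1)) * b q n (i+1) * x^(i+1) * y^(n+1-(i+1))
          + q^(i*(i-1)) * b q n i * x^i * y^(n-i) * (x * q^(2*n)) := by
      intro i hi
      have hin : i < n := Finset.mem_range.mp hi
      obtain ⟨j, rfl⟩ : ∃ j, n = i + j + 1 := ⟨n - i - 1, by omega⟩
      have hp := pascal hq i j
      rw [show i+j+1+1 = i+j+2 by omega, hp]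
      rw [show i+j+1+1-(i+1) = j+1 by omega, show i+j+1-i = j+1 by omega]
      have hexp : q^((i+1)*(i+1-1)) * q^(2*(j+1)) = q^(i*(i-1)) * q^(2*(i+j+1)) := by
        rw [← pow_add, ← pow_add]
        congr 1
        cases i with
        | zero => simp
        | succ c => simp only [Nat.succ_sub_one, Nat.add_sub_cancel]; ring
      calc q^((i+1)*(i+1-1)) * (b q (i+j+1) (i+1) + q^(2*(j+1)) * b q (i+j+1) i) * x^(i+1) * y^(j+1)
          = q^((i+1)*(i+1-1)) * b q (i+j+1) (i+1) * x^(i+1) * y^(j+1)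
            + (q^((i+1)*(i+1-1)) * q^(2*(j+1))) * b q (i+j+1) i * x^(i+1) * y^(j+1) := by ring
        _ = _ := by rw [hexp]; ring
    rw [Finset.sum_congr rfl hmid, Finset.sum_add_distrib]
    have hpow : q^(n*(n-1)) * q^(2*n) = q^((n+1)*(n+1-1)) := by
      rw [← pow_add]; congr 1
      cases n with
      | zero => rfl
      | succ c => simp only [Nat.succ_sub_one, Nat.add_sub_cancel]; ring
    simp only [Nat.sub_self, pow_zero]
    linear_combination x^(n+1) * hpow

lemma sign_prod (q : ℂ) : ∀ m : ℕ, ∏ j ∈ range m, (-(q^(2*j+1))) = (-1)^m * q^(m*m) := by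
  intro m
  induction m with
  | zero => simp
  | succ n ih =>
    rw [Finset.prod_range_succ, ih]
    have : q^(n*n) * q^(2*n+1) = q^((n+1)*(n+1)) := by
      rw [← pow_add]; congr 1; ring
    calc (-1:ℂ)^n * q^(n*n) * -q^(2*n+1) = (-1)^(n+1) * (q^(n*n) * q^(2*n+1)) := by ring
      _ = _ := by rw [this]

lemma Id2 (q : ℂ) (m : ℕ) :
    ∏ j ∈ range (2*m), (q^(2*m) - q^(2*j+1)) = (-1)^m * q^(3*(m*m)) * (D q m)^2 := by
  rw [show 2*m = m+m by ring, Finset.prod_range_add]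
  have h2 : ∏ i ∈ range m, (q^(m+m) - q^(2*(m+i)+1)) = (q^(m+m))^m * D q m := by
    have : ∀ i ∈ range m, q^(m+m) - q^(2*(m+i)+1) = q^(m+m) * (1 - q^(2*i+1)) := by
      intro i hi
      have : q^(2*(m+i)+1) = q^(m+m) * q^(2*i+1) := by rw [← pow_add]; congr 1; ring
      rw [this]; ring
    rw [Finset.prod_congr rfl this, Finset.prod_mul_distrib, Finset.prod_const, D,
      Finset.card_range]
  have h1 : ∏ j ∈ range m, (q^(m+m) - q^(2*j+1)) = ((-1)^m * q^(m*m)) * D q m := by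
    have hfac : ∀ j ∈ range m, q^(m+m) - q^(2*j+1) = (-(q^(2*j+1))) * (1 - q^(2*(m-1-j)+1)) := by
      intro j hj
      have hjm : j < m := Finset.mem_range.mp hj
      have : q^(2*j+1) * q^(2*(m-1-j)+1) = q^(m+m) := by
        rw [← pow_add]; congr 1; omega
      linear_combination -this
    rw [Finset.prod_congr rfl hfac, Finset.prod_mul_distrib, sign_prod q m]
    congr 1
    rw [D, ← Finset.prod_range_reflect (fun i => (1:ℂ) - q^(2*i+1)) m]
  rw [h1, h2]
  have : q^(m*m) * (q^(m+m))^m = q^(3*(m*m)) := by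
    rw [← pow_mul, ← pow_add]; congr 1; ring
  linear_combination ((-1:ℂ)^m * (D q m)^2) * this

lemma Id1 (hq : ‖q‖ < 1) (m : ℕ) :
    (-1:ℂ)^m * q^(3*(m*m)) * (D q m)^2 =
      ∑ k ∈ range (2*m+1), (-1)^k * q^(k*k + 2*m*(2*m-k)) * b q (2*m) k := by
  rw [← Id2 q m]
  have := qbin hq (-q) (q^(2*m)) (2*m)
  have hl : ∀ j ∈ range (2*m), q^(2*m) + (-q) * q^(2*j) = q^(2*m) - q^(2*j+1) := by
    intro j _
    have : q * q^(2*j) = q^(2*j+1) := by rw [← pow_succ']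
    linear_combination -this
  rw [Finset.prod_congr rfl hl] at this
  rw [this]
  refine Finset.sum_congr rfl fun k hk => ?_
  have hk2 : k ≤ 2*m := by have := Finset.mem_range.mp hk; omega
  have h1 : (-q)^k = (-1)^k * q^k := by rw [neg_pow]
  have h2 : (q^(2*m))^(2*m-k) = q^(2*m*(2*m-k)) := by rw [← pow_mul]
  rw [h1, h2]
  have h3 : q^(k*(k-1)) * q^k = q^(k*k) := by
    rw [← pow_add]; congr 1
    cases k with
    | zero => rfl
    | succ c => simp only [Nat.succ_sub_one]; ring
  calc q^(k*(k-1)) * b q (2*m) k * ((-1)^k * q^k) * q^(2*m*(2*m-k))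
      = (-1)^k * ((q^(k*(k-1)) * q^k) * q^(2*m*(2*m-k))) * b q (2*m) k := by ring
    _ = _ := by rw [h3, ← pow_add]
noncomputable def A (q : ℂ) (m l : ℕ) : ℂ := P q (2*m) * P q m / (P q (m+l) * P q (m-l))

-- parity helper
lemma negpow_congr {a c : ℕ} (h : a % 2 = c % 2) : (-1:ℂ)^a = (-1)^c := by
  rcases Nat.even_or_odd a with he | ho
  · have hc : Even c := Nat.even_iff.mpr (by have := Nat.even_iff.mp he; omega)
    rw [he.neg_one_pow, hc.neg_one_pow]
  · have hc : Odd c := Nat.odd_iff.mpr (by have := Nat.odd_iff.mp ho; omega)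
    rw [ho.neg_one_pow, hc.neg_one_pow]

lemma Smm (hq : ‖q‖ < 1) (hq0 : q ≠ 0) (m : ℕ) :
    A q m 0 + 2 * ∑ i ∈ range m, (-1:ℂ)^(i+1) * q^((i+1)*(i+1)) * A q m (i+1)
      = P q m * (D q m)^2 := by
  -- step 1: from Id1, divide by (-1)^m q^{3m²} and multiply by P m
  have key : P q m * (D q m)^2
      = ∑ k ∈ range (2*m+1),
          (-1:ℂ)^((m-k)+(k-m)) * q^(((m-k)+(k-m))*((m-k)+(k-m))) * (P q m * b q (2*m) k) := by
    have h0 : ((-1:ℂ)^m * q^(3*(m*m))) ≠ 0 := by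
      apply mul_ne_zero (pow_ne_zero _ (by norm_num)) (pow_ne_zero _ hq0)
    have hterm : ∀ k ∈ range (2*m+1),
        (-1:ℂ)^k * q^(k*k + 2*m*(2*m-k)) * b q (2*m) k
        = ((-1:ℂ)^m * q^(3*(m*m))) *
          ((-1:ℂ)^((m-k)+(k-m)) * q^(((m-k)+(k-m))*((m-k)+(k-m))) * b q (2*m) k) := by
      intro k hk
      have hk2 : k ≤ 2*m := by have := Finset.mem_range.mp hk; omega
      set d := (m-k)+(k-m) with hd
      have hsign : (-1:ℂ)^k = (-1)^m * (-1)^d := by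
        rw [← pow_add]; exact negpow_congr (by omega)
      have hpow : q^(k*k + 2*m*(2*m-k)) = q^(3*(m*m)) * q^(d*d) := by
        rw [← pow_add]; congr 1
        rcases le_total k m with h | h
        · have : d = m - k := by omega
          rw [this]
          zify [h, hk2, Nat.sub_le]
          ring
        · have : d = k - m := by omega
          rw [this]
          zify [h, hk2, Nat.sub_le]
          ring
      rw [hsign, hpow]; ring
    have := Id1 hq m
    rw [Finset.sum_congr rfl hterm, ← Finset.mul_sum] at this
    have h2 := mul_left_cancel₀ h0 this
    rw [show P q m * D q m^2 = D q m^2 * P q m by ring, h2, Finset.sum_mul]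
    exact Finset.sum_congr rfl fun k _ => by ring
  -- step 2: symmetrize
  rw [show 2*m+1 = m + (m+1) by omega, Finset.sum_range_add,
    Finset.sum_range_succ'] at key
  rw [← Finset.sum_range_reflect
    (fun k => (-1:ℂ)^((m-k)+(k-m)) * q^(((m-k)+(k-m))*((m-k)+(k-m))) * (P q m * b q (2*m) k)) m]
      at key
  -- identify the three pieces
  have hA : ∀ l : ℕ, l ≤ m → P q m * b q (2*m) (m+l) = A q m l := by
    intro l hl
    rw [b, A, show 2*m - (m+l) = m - l by omega]
    field_simp
  have hmid : ∀ i ∈ range m,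
      (fun k => (-1:ℂ)^((m-k)+(k-m)) * q^(((m-k)+(k-m))*((m-k)+(k-m))) * (P q m * b q (2*m) k)) (m-1-i)
      = (-1:ℂ)^(i+1) * q^((i+1)*(i+1)) * A q m (i+1) := by
    intro i hi
    have him : i < m := Finset.mem_range.mp hi
    simp only
    rw [show (m-(m-1-i))+((m-1-i)-m) = i+1 by omega]
    congr 1
    rw [b, A, show 2*m - (m-1-i) = m+(i+1) by omega, show m - (i+1) = m-1-i by omega]
    field_simp
  have hmid2 : ∀ i ∈ range m,
      (fun i => (-1:ℂ)^((m-(m+i))+((m+i)-m)) * q^(((m-(m+i))+((m+i)-m))*((m-(m+i))+((m+i)-m))) * (P q m * b q (2*m) (m+i))) (i+1)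
      = (-1:ℂ)^(i+1) * q^((i+1)*(i+1)) * A q m (i+1) := by
    intro i hi
    have him : i < m := Finset.mem_range.mp hi
    simp only
    rw [show (m-(m+(i+1)))+((m+(i+1))-m) = i+1 by omega, hA (i+1) (by omega)]
  rw [Finset.sum_congr rfl hmid, Finset.sum_congr rfl hmid2] at key
  rw [show (m-(m+0))+((m+0)-m) = 0 by omega] at key
  rw [hA 0 (by omega)] at key
  rw [key]
  simp only [pow_zero, one_mul, Nat.add_zero]
  ring

lemma hs1 (hq : ‖q‖ < 1) : Summable (fun n : ℕ => ‖q‖^(n+1)) := by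
  simpa [pow_succ] using (summable_geometric_of_lt_one (norm_nonneg q) hq).mul_right ‖q‖

lemma summable_pow_e (hq : ‖q‖ < 1) {e : ℕ → ℕ} (he : ∀ n, n+1 ≤ e n) :
    Summable (fun n : ℕ => ‖q‖ ^ e n) := by
  refine Summable.of_nonneg_of_le (fun n => pow_nonneg (norm_nonneg q) _)
    (fun n => pow_le_pow_of_le_one (norm_nonneg q) hq.le (he n)) (hs1 hq)

lemma summable_log (hq : ‖q‖ < 1) {e : ℕ → ℕ} (he : ∀ n, n+1 ≤ e n) :
    Summable (fun n : ℕ => Complex.log (1 - q ^ e n)) := by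
  have hlim : Tendsto (fun n : ℕ => ‖q‖ ^ e n) atTop (𝓝 0) :=
    (summable_pow_e hq he).tendsto_atTop_zero
  have hev : ∀ᶠ n in atTop, ‖Complex.log (1 - q ^ e n)‖ ≤ (3/2) * ‖q‖ ^ e n := by
    filter_upwards [hlim.eventually_le_const (by norm_num : (0:ℝ) < 1/2)] with n hn
    have : Complex.log (1 - q ^ e n) = Complex.log (1 + (- q ^ e n)) := by ring_nf
    rw [this]
    simpa using Complex.norm_log_one_add_half_le_self (z := - q ^ e n) (by simpa using hn)
  exact Summable.of_norm_bounded_eventually_nat (((summable_pow_e hq he)).mul_left _) hev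

lemma hasProd_e (hq : ‖q‖ < 1) {e : ℕ → ℕ} (he : ∀ n, n+1 ≤ e n) :
    HasProd (fun n => 1 - q ^ e n) (∏' n : ℕ, (1 - q ^ e n)) ∧ (∏' n : ℕ, (1 - q ^ e n)) ≠ 0 := by
  have hne : ∀ (x : ℕ) (n : ℕ), (fun n (_ : ℕ) => 1 - q ^ e n) n x ≠ 0 := by
    intro _ n h
    have h1 : q ^ e n = 1 := by linear_combination -h
    have : ‖q ^ e n‖ < 1 := by
      rw [norm_pow]; exact pow_lt_one₀ (norm_nonneg q) hq (by have := he n; omega)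
    rw [h1] at this; simp at this
  have hsum : ∀ x : ℕ, Summable fun n => Complex.log ((fun n (_ : ℕ) => 1 - q ^ e n) n x) :=
    fun _ => summable_log hq he
  constructor
  · exact (Complex.hasProd_of_hasSum_log (fun n => hne 0 n) (hsum 0).hasSum).multipliable.hasProd
  · have : Complex.exp (∑' n, Complex.log (1 - q ^ e n)) = ∏' n, (1 - q ^ e n) :=
      Complex.cexp_tsum_eq_tprod (fun n => hne 0 n) (hsum 0)
    rw [← this]
    exact Complex.exp_ne_zero _
noncomputable def Pinf (q : ℂ) : ℂ := ∏' n : ℕ, (1 - q^(2*n+2))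
noncomputable def Dinf (q : ℂ) : ℂ := ∏' n : ℕ, (1 - q^(2*n+1))
noncomputable def K (q : ℂ) : ℝ := ∑' n : ℕ, ‖q‖^(n+1)

lemma tendsto_P (hq : ‖q‖ < 1) : Tendsto (P q) atTop (𝓝 (Pinf q)) :=
  (hasProd_e hq (e := fun n => 2*n+2) (fun n => show n+1 ≤ 2*n+2 by omega)).1.tendsto_prod_nat

lemma tendsto_D (hq : ‖q‖ < 1) : Tendsto (D q) atTop (𝓝 (Dinf q)) :=
  (hasProd_e hq (e := fun n => 2*n+1) (fun n => show n+1 ≤ 2*n+1 by omega)).1.tendsto_prod_nat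

lemma Pinf_ne (hq : ‖q‖ < 1) : Pinf q ≠ 0 :=
  (hasProd_e hq (e := fun n => 2*n+2) (fun n => show n+1 ≤ 2*n+2 by omega)).2

lemma norm_P_prod (hq : ‖q‖ < 1) (s : Finset ℕ) :
    ‖∏ j ∈ s, (1 - q^(2*j+2))‖ ≤ Real.exp (K q) := by
  rw [norm_prod]
  calc ∏ j ∈ s, ‖1 - q^(2*j+2)‖ ≤ ∏ j ∈ s, Real.exp (‖q‖^(2*j+2)) := by
        refine Finset.prod_le_prod (fun j _ => norm_nonneg _) (fun j _ => ?_)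
        calc ‖1 - q^(2*j+2)‖ ≤ ‖(1:ℂ)‖ + ‖q^(2*j+2)‖ := norm_sub_le _ _
          _ = 1 + ‖q‖^(2*j+2) := by rw [norm_one, norm_pow]
          _ ≤ Real.exp (‖q‖^(2*j+2)) := by
              have := Real.add_one_le_exp (‖q‖^(2*j+2)); linarith
    _ = Real.exp (∑ j ∈ s, ‖q‖^(2*j+2)) := (Real.exp_sum s _).symm
    _ ≤ Real.exp (K q) := by
        apply Real.exp_le_exp.mpr
        calc ∑ j ∈ s, ‖q‖^(2*j+2) ≤ ∑ j ∈ s, ‖q‖^(j+1) :=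
              Finset.sum_le_sum fun j _ =>
                pow_le_pow_of_le_one (norm_nonneg q) hq.le (by omega)
          _ ≤ K q := Summable.sum_le_tsum s (fun j _ => pow_nonneg (norm_nonneg q) _) (hs1 hq)

lemma A_eq (hq : ‖q‖ < 1) {m l : ℕ} (hl : l ≤ m) :
    A q m l = (∏ j ∈ Ico (m+l) (2*m), (1 - q^(2*j+2))) * (∏ j ∈ Ico (m-l) m, (1 - q^(2*j+2))) := by
  have h1 : P q (m+l) * ∏ j ∈ Ico (m+l) (2*m), (1 - q^(2*j+2)) = P q (2*m) :=
    Finset.prod_range_mul_prod_Ico _ (by omega)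
  have h2 : P q (m-l) * ∏ j ∈ Ico (m-l) m, (1 - q^(2*j+2)) = P q m :=
    Finset.prod_range_mul_prod_Ico _ (by omega)
  rw [A, ← h1, ← h2]
  field_simp [Pne hq]

lemma norm_A_le (hq : ‖q‖ < 1) {m l : ℕ} (hl : l ≤ m) :
    ‖A q m l‖ ≤ Real.exp (K q) * Real.exp (K q) := by
  rw [A_eq hq hl, norm_mul]
  exact mul_le_mul (norm_P_prod hq _) (norm_P_prod hq _) (norm_nonneg _) (Real.exp_pos _).le

lemma tendsto_A (hq : ‖q‖ < 1) (l : ℕ) : Tendsto (fun m => A q m l) atTop (𝓝 1) := by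
  have h2m : Tendsto (fun m : ℕ => 2*m) atTop atTop :=
    tendsto_atTop_mono (fun m => show id m ≤ 2*m by simp only [id]; omega) tendsto_id
  have t1 : Tendsto (fun m => P q (2*m)) atTop (𝓝 (Pinf q)) := (tendsto_P hq).comp h2m
  have t2 : Tendsto (fun m => P q (m+l)) atTop (𝓝 (Pinf q)) :=
    (tendsto_P hq).comp (tendsto_atTop_mono (fun m => show id m ≤ m + l by simp) tendsto_id)
  have t3 : Tendsto (fun m => P q (m-l)) atTop (𝓝 (Pinf q)) :=
    (tendsto_P hq).comp (tendsto_sub_atTop_nat l)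
  have := ((t1.mul (tendsto_P hq)).div (t2.mul t3)
    (mul_ne_zero (Pinf_ne hq) (Pinf_ne hq)))
  have heq : (Pinf q * Pinf q) / (Pinf q * Pinf q) = 1 :=
    div_self (mul_ne_zero (Pinf_ne hq) (Pinf_ne hq))
  rw [heq] at this
  exact this

lemma main_limit (hq : ‖q‖ < 1) (hq0 : q ≠ 0) :
    Pinf q * (Dinf q)^2 = 1 + 2 * ∑' l : ℕ, (-1:ℂ)^(l+1) * q^((l+1)*(l+1)) := by
  set f : ℕ → ℕ → ℂ :=
    fun m l => if l < m then (-1:ℂ)^(l+1) * q^((l+1)*(l+1)) * A q m (l+1) else 0 with hf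
  have h1 : ∀ m, A q m 0 + 2 * ∑' l, f m l = P q m * (D q m)^2 := by
    intro m
    rw [tsum_eq_sum (s := range m) (f := f m)
      (fun l hl => if_neg (by simpa using hl))]
    rw [Finset.sum_congr rfl (fun i hi => if_pos (Finset.mem_range.mp hi))]
    exact Smm hq hq0 m
  have hbound : Summable (fun l : ℕ => Real.exp (K q) * Real.exp (K q) * ‖q‖^(l+1)) :=
    (hs1 hq).mul_left _
  have hab : ∀ l : ℕ, Tendsto (f · l) atTop (𝓝 ((-1:ℂ)^(l+1) * q^((l+1)*(l+1)))) := by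
    intro l
    have : Tendsto (fun m => (-1:ℂ)^(l+1) * q^((l+1)*(l+1)) * A q m (l+1)) atTop
        (𝓝 ((-1:ℂ)^(l+1) * q^((l+1)*(l+1)) * 1)) := (tendsto_A hq (l+1)).const_mul _
    rw [mul_one] at this
    refine this.congr' ?_
    filter_upwards [eventually_ge_atTop (l+1)] with m hm
    exact (if_pos (by omega)).symm
  have hb : ∀ᶠ m in atTop, ∀ l, ‖f m l‖ ≤ Real.exp (K q) * Real.exp (K q) * ‖q‖^(l+1) := by
    refine Eventually.of_forall fun m l => ?_
    by_cases hlm : l < m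
    · rw [hf]; simp only [if_pos hlm]
      rw [norm_mul, norm_mul, norm_pow, norm_neg, norm_one, one_pow, one_mul, norm_pow]
      calc ‖q‖^((l+1)*(l+1)) * ‖A q m (l+1)‖
          ≤ ‖q‖^(l+1) * (Real.exp (K q) * Real.exp (K q)) := by
            refine mul_le_mul ?_ (norm_A_le hq (by omega)) (norm_nonneg _) ?_
            · exact pow_le_pow_of_le_one (norm_nonneg q) hq.le (Nat.le_mul_of_pos_left _ (by omega))
            · positivity
        _ = Real.exp (K q) * Real.exp (K q) * ‖q‖^(l+1) := by ring
    · rw [hf]; simp only [if_neg hlm, norm_zero]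
      positivity
  have h2 : Tendsto (fun m => ∑' l, f m l) atTop
      (𝓝 (∑' l : ℕ, (-1:ℂ)^(l+1) * q^((l+1)*(l+1)))) :=
    tendsto_tsum_of_dominated_convergence hbound hab hb
  have h3 : Tendsto (fun m => A q m 0 + 2 * ∑' l, f m l) atTop
      (𝓝 (1 + 2 * ∑' l : ℕ, (-1:ℂ)^(l+1) * q^((l+1)*(l+1)))) :=
    (tendsto_A hq 0).add (h2.const_mul 2)
  have h4 : Tendsto (fun m => P q m * (D q m)^2) atTop (𝓝 (Pinf q * (Dinf q)^2)) :=
    (tendsto_P hq).mul ((tendsto_D hq).pow 2)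
  have h5 := h3.congr h1
  exact tendsto_nhds_unique h4 h5

theorem stmt10' {q : ℂ} (hq : ‖q‖ < 1) (hq0 : q ≠ 0) :
    (∏' n : ℕ, (1 - q ^ (n + 1))) ^ 2 / (∏' n : ℕ, (1 - q ^ (2 * (n + 1)))) =
      1 + 2 * ∑' n : ℕ, (-1 : ℂ) ^ (n + 1) * q ^ ((n + 1) ^ 2) := by
  have hmo : Multipliable (fun k : ℕ => 1 - q^(2*k+1)) :=
    (hasProd_e hq (e := fun n => 2*n+1) (fun n => show n+1 ≤ 2*n+1 by omega)).1.multipliable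
  have hme : Multipliable (fun k : ℕ => 1 - q^(2*k+2)) :=
    (hasProd_e hq (e := fun n => 2*n+2) (fun n => show n+1 ≤ 2*n+2 by omega)).1.multipliable
  have hsplit : (∏' n : ℕ, (1 - q^(n+1))) = Dinf q * Pinf q := by
    rw [Dinf, Pinf]
    rw [← tprod_even_mul_odd (f := fun n : ℕ => 1 - q^(n+1))
      (hmo.congr (fun k => by norm_num))
      ((hme.congr (fun k => by norm_num : ∀ k, (1:ℂ) - q^(2*k+2) = 1 - q^(2*k+1+1))))]
  have h2 : (∏' n : ℕ, (1 - q^(2*(n+1)))) = Pinf q :=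
    tprod_congr fun n => by rw [show 2*(n+1) = 2*n+2 by ring]
  have h3 : (∑' n : ℕ, (-1 : ℂ)^(n+1) * q^((n+1)^2))
      = ∑' n : ℕ, (-1 : ℂ)^(n+1) * q^((n+1)*(n+1)) :=
    tsum_congr fun n => by rw [pow_two]
  rw [hsplit, h2, h3, ← main_limit hq hq0]
  field_simp [Pinf_ne hq]

end St10

/-- For `|q| < 1`, `(q;q)_∞² / (q²;q²)_∞ = 1 + 2 ∑_{n ≥ 1} (-1)ⁿ q^{n²}`. -/
theorem stmt10 (q : ℂ) (hq : ‖q‖ < 1) :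
    (∏' n : ℕ, (1 - q ^ (n + 1))) ^ 2 / (∏' n : ℕ, (1 - q ^ (2 * (n + 1)))) =
      1 + 2 * ∑' n : ℕ, (-1 : ℂ) ^ (n + 1) * q ^ ((n + 1) ^ 2) := by
  rcases eq_or_ne q 0 with rfl | hq0
  · have h1 : ∀ n : ℕ, (1:ℂ) - 0 ^ (n+1) = 1 := fun n => by simp
    have h2 : ∀ n : ℕ, (1:ℂ) - 0 ^ (2*(n+1)) = 1 := fun n => by
      rw [zero_pow (by omega)]; ring
    have h3 : ∀ n : ℕ, (-1:ℂ)^(n+1) * 0 ^ ((n+1)^2) = 0 := fun n => by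
      rw [zero_pow (by positivity)]; ring
    rw [tprod_congr h1, tprod_congr h2, tsum_congr h3]
    simp
  · exact St10.stmt10' hq hq0
end

section
/- Let S be a subset of the positive integers and let q be a complex number with |q| < 1. Then ∑_{N=1}^∞ c_S(N) q^N = ∑_{n ∈ S} q^n ∏_{m=1}^∞ (1 − q^{m+n}), where c_S(N) := (number of partitions of N into an odd number of distinct parts with smallest part in S) − (number of partitions of N into an even number of distinct parts with smallest part in S). In other words, the partition sum ∑_{λ: sm(λ)∈S} μ*_P(λ) q^{|λ|} equals ∑_{n ∈ S} q^n ∏_{m=1}^∞ (1 − q^{m+n}). -/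
open Filter Topology

-- Step 1: summability of products over finsets
lemma summable_prod_norm {r : ℕ → ℝ} (hr0 : ∀ m, 0 ≤ r m) (hr : Summable r) :
    Summable (fun s : Finset ℕ => ∏ m ∈ s, r m) := by
  apply summable_of_sum_le (c := Real.exp (∑' m, r m))
    (fun s => Finset.prod_nonneg fun m _ => hr0 m)
  intro A
  calc ∑ s ∈ A, ∏ m ∈ s, r m ≤ ∑ s ∈ (A.sup id).powerset, ∏ m ∈ s, r m := by
        apply Finset.sum_le_sum_of_subset_of_nonneg
        · intro s hs
          exact Finset.mem_powerset.2 (Finset.le_sup (f := id) hs)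
        · exact fun s _ _ => Finset.prod_nonneg fun m _ => hr0 m
    _ = ∏ m ∈ A.sup id, (r m + 1) := by
        rw [Finset.prod_add]; simp
    _ ≤ ∏ m ∈ A.sup id, Real.exp (r m) := by
        apply Finset.prod_le_prod
        · exact fun m _ => by have := hr0 m; linarith
        · exact fun m _ => by have := Real.add_one_le_exp (r m); linarith
    _ = Real.exp (∑ m ∈ A.sup id, r m) := by rw [Real.exp_sum]
    _ ≤ Real.exp (∑' m, r m) := by
        apply Real.exp_le_exp.2
        exact Summable.sum_le_tsum _ (fun m _ => hr0 m) hr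

lemma summable_prod_cx {f : ℕ → ℂ} (hf : Summable (fun m => ‖f m‖)) :
    Summable (fun s : Finset ℕ => ∏ m ∈ s, f m) := by
  apply Summable.of_norm_bounded (summable_prod_norm (fun m => norm_nonneg _) hf)
  intro s
  rw [norm_prod]

lemma tendsto_powerset_sum {g : Finset ℕ → ℂ} (hg : Summable g) :
    Tendsto (fun t : Finset ℕ => ∑ s ∈ t.powerset, g s) atTop (𝓝 (∑' s, g s)) := by
  have h1 : Tendsto (fun A : Finset (Finset ℕ) => ∑ s ∈ A, g s) atTop (𝓝 (∑' s, g s)) :=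
    hg.hasSum
  have h2 : Tendsto (fun t : Finset ℕ => t.powerset) atTop atTop := by
    apply Filter.tendsto_atTop_atTop_of_monotone
    · intro a b hab
      exact Finset.powerset_mono.2 hab
    · intro A
      exact ⟨A.sup id, fun s hs => Finset.mem_powerset.2 (Finset.le_sup (f := id) hs)⟩
  exact h1.comp h2

lemma hasProd_one_add {f : ℕ → ℂ} (hf : Summable (fun m => ‖f m‖)) :
    HasProd (fun m => 1 + f m) (∑' s : Finset ℕ, ∏ m ∈ s, f m) := by
  have hs := summable_prod_cx hf
  rw [HasProd]
  have : (fun t : Finset ℕ => ∏ m ∈ t, (1 + f m)) =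
      (fun t : Finset ℕ => ∑ s ∈ t.powerset, ∏ m ∈ s, f m) := by
    funext t
    simp_rw [fun m => add_comm (1:ℂ) (f m)]
    rw [Finset.prod_add]
    simp
  rw [this]
  exact tendsto_powerset_sum hs

open Filter Topology

/-- Condition: distinct parts and smallest part in S. -/
def PCond (S : Set ℕ) {N : ℕ} (l : N.Partition) : Prop :=
  l.parts.Nodup ∧ ∃ p ∈ l.parts, p ∈ S ∧ ∀ x ∈ l.parts, p ≤ x

def pparts (n : ℕ) (s : Finset ℕ) : Multiset ℕ :=
  n ::ₘ s.val.map (fun m => m + 1 + n)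

lemma pparts_sum (n : ℕ) (s : Finset ℕ) :
    (pparts n s).sum = n + (s.val.map (fun m => m + 1 + n)).sum := by
  simp [pparts]

noncomputable def eFun (S : Set ℕ) (hS : 0 ∉ S) (p : ↥S × Finset ℕ) :
    Σ N : ℕ, {l : N.Partition // PCond S l} := by
  obtain ⟨⟨n, hn⟩, s⟩ := p
  refine ⟨(pparts n s).sum, ⟨⟨pparts n s, ?_, rfl⟩, ?_, ?_⟩⟩
  · intro i hi
    rcases Multiset.mem_cons.1 hi with h | h
    · subst h; exact Nat.pos_of_ne_zero (fun h0 => hS (h0 ▸ hn))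
    · obtain ⟨m, _, rfl⟩ := Multiset.mem_map.1 h
      omega
  · refine Multiset.nodup_cons.2 ⟨?_, ?_⟩
    · intro h
      obtain ⟨m, _, hm⟩ := Multiset.mem_map.1 h
      omega
    · refine Multiset.Nodup.map ?_ s.nodup
      intro a b hab
      simp only at hab
      omega
  · refine ⟨n, Multiset.mem_cons_self _ _, hn, ?_⟩
    intro x hx
    rcases Multiset.mem_cons.1 hx with h | h
    · omega
    · obtain ⟨m, _, rfl⟩ := Multiset.mem_map.1 h
      omega

lemma eFun_parts (S : Set ℕ) (hS : 0 ∉ S) (p : ↥S × Finset ℕ) :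
    (eFun S hS p).2.val.parts = pparts p.1 p.2 := rfl

lemma sigma_ext {S : Set ℕ} {σ τ : Σ N : ℕ, {l : N.Partition // PCond S l}}
    (h : σ.2.val.parts = τ.2.val.parts) : σ = τ := by
  obtain ⟨N, l, hl⟩ := σ
  obtain ⟨M, m, hm⟩ := τ
  have hNM : N = M := by rw [← l.parts_sum, ← m.parts_sum, h]
  subst hNM
  simp only [Sigma.mk.inj_iff, heq_eq_eq]
  exact ⟨trivial, Subtype.ext (Nat.Partition.ext h)⟩

lemma eFun_bij (S : Set ℕ) (hS : 0 ∉ S) : Function.Bijective (eFun S hS) := by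
  constructor
  · rintro ⟨⟨n, hn⟩, s⟩ ⟨⟨n', hn'⟩, s'⟩ h
    have hp : pparts n s = pparts n' s' := by
      rw [← eFun_parts S hS (⟨n, hn⟩, s), ← eFun_parts S hS (⟨n', hn'⟩, s'), h]
    have hnn' : n = n' := by
      have h1 : n ∈ pparts n' s' := hp ▸ Multiset.mem_cons_self _ _
      have h2 : n' ∈ pparts n s := hp ▸ Multiset.mem_cons_self _ _
      rcases Multiset.mem_cons.1 h1 with h' | h'
      · exact h'
      · obtain ⟨m, _, hm⟩ := Multiset.mem_map.1 h'
        rcases Multiset.mem_cons.1 h2 with h'' | h''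
        · omega
        · obtain ⟨m', _, hm'⟩ := Multiset.mem_map.1 h''
          omega
    subst hnn'
    have hmap : s.val.map (fun m => m + 1 + n) = s'.val.map (fun m => m + 1 + n) :=
      (Multiset.cons_inj_right _).1 hp
    have hss' : s = s' := by
      apply Finset.val_injective
      exact Multiset.map_injective (fun a b hab => by omega) hmap
    simp [hss']
  · rintro ⟨N, l, hnd, p, hpl, hpS, hmin⟩
    have hppos : 0 < p := l.parts_pos hpl
    set rest := l.parts.erase p with hrest
    have hcons : p ::ₘ rest = l.parts := Multiset.cons_erase hpl
    have hrest_gt : ∀ x ∈ rest, p + 1 ≤ x := by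
      intro x hx
      have hxl : x ∈ l.parts := Multiset.mem_of_mem_erase hx
      have hge := hmin x hxl
      rcases Nat.eq_or_lt_of_le hge with h | h
      · exfalso
        subst h
        exact hnd.notMem_erase hx
      · omega
    refine ⟨⟨⟨p, hpS⟩, ⟨rest.map (fun x => x - (p + 1)), ?_⟩⟩, ?_⟩
    · apply Multiset.Nodup.map_on
      · intro x hx y hy hxy
        have := hrest_gt x hx
        have := hrest_gt y hy
        omega
      · exact hnd.erase p
    · apply sigma_ext
      rw [eFun_parts]
      show p ::ₘ Multiset.map (fun m => m + 1 + p) (Multiset.map (fun x => x - (p + 1)) rest)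
          = l.parts
      rw [Multiset.map_map]
      have hmaps : Multiset.map ((fun m => m + 1 + p) ∘ fun x => x - (p + 1)) rest = rest := by
        have hid : ∀ x ∈ rest, ((fun m => m + 1 + p) ∘ fun x => x - (p + 1)) x = id x := by
          intro x hx
          have := hrest_gt x hx
          simp only [Function.comp_apply, id]
          omega
        rw [Multiset.map_congr rfl hid, Multiset.map_id]
      rw [hmaps, hcons]

open scoped Classical in
/-- The signed count of partitions of `N` into distinct parts with smallest part in `S`:
(number with an odd number of parts) minus (number with an even number of parts). -/
noncomputable def signedCount (S : Set ℕ) (N : ℕ) : ℤ :=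
  ((Finset.univ.filter fun l : N.Partition =>
      l.parts.Nodup ∧ Odd (Multiset.card l.parts) ∧
        ∃ s ∈ l.parts, s ∈ S ∧ ∀ x ∈ l.parts, s ≤ x).card : ℤ) -
  ((Finset.univ.filter fun l : N.Partition =>
      l.parts.Nodup ∧ Even (Multiset.card l.parts) ∧
        ∃ s ∈ l.parts, s ∈ S ∧ ∀ x ∈ l.parts, s ≤ x).card : ℤ)


lemma eFun_fst (S : Set ℕ) (hS : 0 ∉ S) (p : ↥S × Finset ℕ) :
    (eFun S hS p).1 = (pparts p.1 p.2).sum := rfl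


set_option maxHeartbeats 1000000 in
open scoped Classical in
lemma perN (S : Set ℕ) (N : ℕ) (q : ℂ) :
    (signedCount S N : ℂ) * q ^ N =
      ∑' (l : {l : N.Partition // PCond S l}),
        (-1 : ℂ) ^ (Multiset.card l.val.parts + 1) * q ^ N := by
  rw [tsum_fintype, ← Finset.sum_mul]
  congr 1
  rw [← Finset.sum_subtype (Finset.univ.filter fun l : N.Partition => PCond S l)
      (fun x => by simp [Finset.mem_filter]) (fun l => (-1 : ℂ) ^ (Multiset.card l.parts + 1))]
  rw [Finset.sum_filter]
  unfold signedCount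
  simp only [Finset.card_filter]
  push_cast
  rw [← Finset.sum_sub_distrib]
  apply Finset.sum_congr rfl
  intro l _
  by_cases h1 : l.parts.Nodup
  · by_cases h2 : ∃ p ∈ l.parts, p ∈ S ∧ ∀ x ∈ l.parts, p ≤ x
    · by_cases h3 : Odd (Multiset.card l.parts)
      · have he : ¬ Even (Multiset.card l.parts) := (Nat.not_even_iff_odd.mpr h3)
        simp [PCond, h1, h2, h3, he, Even.neg_one_pow h3.add_one]
      · have h3' : Even (Multiset.card l.parts) := Nat.not_odd_iff_even.mp h3
        simp [PCond, h1, h2, h3, h3', Odd.neg_one_pow h3'.add_one]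
    · simp [PCond, h1, h2]
  · simp [PCond, h1]


set_option maxHeartbeats 1000000 in
/-- For `S` a set of positive integers and `|q| < 1`,
`∑_{N ≥ 1} c_S(N) q^N = ∑_{n ∈ S} qⁿ ∏_{m=1}^∞ (1 - q^{m+n})`, i.e. the partition sum
`∑_{sm(λ) ∈ S} μ*_P(λ) q^{|λ|}` equals `F_S(q)`. -/
theorem stmt11 (S : Set ℕ) (hS : 0 ∉ S) (q : ℂ) (hq : ‖q‖ < 1) :
    ∑' N : ℕ, (signedCount S N : ℂ) * q ^ N =
      ∑' n : S, q ^ (n : ℕ) * ∏' m : ℕ, (1 - q ^ (m + 1 + (n : ℕ))) := by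
  classical
  set a : ℝ := ‖q‖ with ha
  have ha0 : 0 ≤ a := norm_nonneg q
  set f : ℕ → ℕ → ℂ := fun n m => -(q ^ (m + 1 + n)) with hf
  have hgeo : Summable (fun m : ℕ => a ^ m) := summable_geometric_of_lt_one ha0 hq
  have hfnorm : ∀ n : ℕ, Summable (fun m => ‖f n m‖) := by
    intro n
    have : (fun m => ‖f n m‖) = fun m => a ^ m * a ^ (1 + n) := by
      funext m
      simp only [hf, norm_neg, norm_pow, ← ha, ← pow_add, add_assoc]
    rw [this]
    exact hgeo.mul_right _
  have hprodf : ∀ n : ℕ, ∏' m : ℕ, (1 - q ^ (m + 1 + n)) = ∑' s : Finset ℕ, ∏ m ∈ s, f n m := by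
    intro n
    have h1 : (fun m : ℕ => 1 - q ^ (m + 1 + n)) = fun m => 1 + f n m := by
      funext m; simp [hf, sub_eq_add_neg]
    rw [h1, (hasProd_one_add (hfnorm n)).tprod_eq]
  -- term functions
  set F : ↥S × Finset ℕ → ℂ := fun p => (-1) ^ (p.2.card) * q ^ (pparts p.1 p.2).sum with hF
  have hFterm : ∀ (n : ↥S) (s : Finset ℕ),
      q ^ (n : ℕ) * ∏ m ∈ s, f (n : ℕ) m = F (n, s) := by
    intro n s
    have h1 : ∏ m ∈ s, f (n : ℕ) m =
        (-1) ^ s.card * q ^ (∑ m ∈ s, (m + 1 + (n : ℕ))) := by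
      have : ∀ m ∈ s, f (n : ℕ) m = (-1) * q ^ (m + 1 + (n : ℕ)) := by
        intro m _; simp [hf]
      rw [Finset.prod_congr rfl this, Finset.prod_mul_distrib, Finset.prod_const,
        Finset.prod_pow_eq_pow_sum]
    rw [h1]
    show _ = (-1 : ℂ) ^ s.card * q ^ (pparts (n : ℕ) s).sum
    have h2 : (pparts (n : ℕ) s).sum = (n : ℕ) + ∑ m ∈ s, (m + 1 + (n : ℕ)) := by
      simp [pparts]
    rw [h2, pow_add]
    ring
  -- summability
  have hu : Summable (fun n : ↥S => a ^ (n : ℕ)) := hgeo.subtype S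
  have hvsum : Summable (fun m : ℕ => a ^ (m + 1)) := by
    have : (fun m : ℕ => a ^ (m + 1)) = fun m => a ^ m * a := by
      funext m; rw [pow_succ]
    rw [this]; exact hgeo.mul_right _
  have hv : Summable (fun s : Finset ℕ => ∏ m ∈ s, a ^ (m + 1)) :=
    summable_prod_norm (fun m => pow_nonneg ha0 _) hvsum
  have huv : Summable (fun p : ↥S × Finset ℕ => a ^ (p.1 : ℕ) * ∏ m ∈ p.2, a ^ (m + 1)) :=
    hu.mul_of_nonneg hv (fun n => pow_nonneg ha0 _)
      (fun s => Finset.prod_nonneg fun m _ => pow_nonneg ha0 _)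
  have hFsummable : Summable F := by
    apply Summable.of_norm_bounded huv
    rintro ⟨n, s⟩
    have hnorm : ‖F (n, s)‖ = a ^ (pparts (n : ℕ) s).sum := by
      show ‖(-1 : ℂ) ^ s.card * q ^ (pparts (n : ℕ) s).sum‖ = a ^ (pparts (n : ℕ) s).sum
      simp only [norm_mul, norm_pow, norm_neg, norm_one, one_pow, one_mul, ← ha]
    rw [hnorm]
    have hsum : (pparts (n : ℕ) s).sum = (n : ℕ) + ∑ m ∈ s, (m + 1 + (n : ℕ)) := by
      simp [pparts]
    have hge : (n : ℕ) + ∑ m ∈ s, (m + 1) ≤ (pparts (n : ℕ) s).sum := by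
      rw [hsum]
      have : ∑ m ∈ s, (m + 1) ≤ ∑ m ∈ s, (m + 1 + (n : ℕ)) :=
        Finset.sum_le_sum fun m _ => by omega
      omega
    calc a ^ (pparts (n : ℕ) s).sum ≤ a ^ ((n : ℕ) + ∑ m ∈ s, (m + 1)) :=
          pow_le_pow_of_le_one ha0 hq.le hge
      _ = a ^ (n : ℕ) * ∏ m ∈ s, a ^ (m + 1) := by
          rw [pow_add, Finset.prod_pow_eq_pow_sum]
  -- the sigma-side function
  set G : (Σ N : ℕ, {l : N.Partition // PCond S l}) → ℂ :=
    fun σ => (-1) ^ (Multiset.card σ.2.val.parts + 1) * q ^ σ.1 with hG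
  have hGF : ∀ p : ↥S × Finset ℕ, G (eFun S hS p) = F p := by
    rintro ⟨n, s⟩
    show (-1 : ℂ) ^ (Multiset.card (eFun S hS (n, s)).2.val.parts + 1) * q ^ (eFun S hS (n, s)).1
      = (-1) ^ s.card * q ^ (pparts (n : ℕ) s).sum
    have hc : Multiset.card (eFun S hS (n, s)).2.val.parts = s.card + 1 := by
      rw [eFun_parts]
      simp [pparts]
    rw [hc, eFun_fst]
    have : (-1 : ℂ) ^ (s.card + 1 + 1) = (-1) ^ s.card := by
      rw [pow_succ, pow_succ]; ring
    rw [this]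
  set e : (↥S × Finset ℕ) ≃ (Σ N : ℕ, {l : N.Partition // PCond S l}) :=
    Equiv.ofBijective _ (eFun_bij S hS) with he
  have hGe : (G ∘ e) = F := funext fun p => hGF p
  have hGsummable : Summable G := e.summable_iff.mp (by rw [hGe]; exact hFsummable)
  calc ∑' N : ℕ, (signedCount S N : ℂ) * q ^ N
      = ∑' N : ℕ, ∑' (l : {l : N.Partition // PCond S l}), G ⟨N, l⟩ := by
        exact tsum_congr fun N => perN S N q
    _ = ∑' σ, G σ := (Summable.tsum_sigma hGsummable).symm
    _ = ∑' p : ↥S × Finset ℕ, G (e p) := (e.tsum_eq G).symm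
    _ = ∑' p : ↥S × Finset ℕ, F p := by exact tsum_congr fun p => hGF p
    _ = ∑' (n : ↥S), ∑' (s : Finset ℕ), F (n, s) := Summable.tsum_prod hFsummable
    _ = ∑' n : S, q ^ (n : ℕ) * ∏' m : ℕ, (1 - q ^ (m + 1 + (n : ℕ))) := by
        apply tsum_congr
        intro n
        rw [hprodf (n : ℕ), ← tsum_mul_left]
        exact tsum_congr fun s => (hFterm n s).symm
end

section
/- For every complex number q with |q| < 1, the sum over odd positive integers n of q^n ∏_{m=1}^∞ (1 − q^{m+n}) equals (1/2) · [1 − (∏_{n=1}^∞ (1 − q^n))^2 / ∏_{n=1}^∞ (1 − q^{2n})]; that is, F_{S_{1,2}}(q) = (1/2)[1 − (q;q)_∞^2/(q^2;q^2)_∞]. -/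
open Filter Finset Complex Topology

namespace Stmt15

variable {q : ℂ}

lemma one_add_ne {z : ℂ} (hz : ‖z‖ < 1) : (1 : ℂ) + z ≠ 0 := by
  intro h
  have : z = -1 := by linear_combination h
  rw [this] at hz; simp at hz

lemma key (hq : ‖q‖ < 1) (f : ℕ → ℂ) (hf : ∀ m, ‖f m‖ ≤ ‖q‖ ^ (m + 1)) :
    Multipliable (fun m => 1 + f m) ∧ (∏' m, (1 + f m)) ≠ 0 := by
  have hq0 : (0:ℝ) ≤ ‖q‖ := norm_nonneg q
  have hlt : ∀ m, ‖f m‖ < 1 := fun m =>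
    lt_of_le_of_lt ((hf m).trans (pow_le_of_le_one hq0 hq.le (Nat.succ_ne_zero m))) hq
  have hne : ∀ m, (1 : ℂ) + f m ≠ 0 := fun m => one_add_ne (hlt m)
  have htend : Tendsto (fun m : ℕ => ‖q‖ ^ (m + 1)) atTop (𝓝 0) := by
    have := (tendsto_pow_atTop_nhds_zero_of_lt_one hq0 hq).comp (tendsto_add_atTop_nat 1)
    exact this
  have hlog : Summable fun m => Complex.log (1 + f m) := by
    apply Summable.of_norm_bounded_eventually_nat (g := fun m => 3/2 * ‖q‖ ^ (m + 1))
    · exact (summable_geometric_of_lt_one hq0 hq).mul_left _ |>.comp_injective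
        (add_left_injective 1) |>.congr (fun m => rfl)
    · filter_upwards [htend.eventually_le_const (by norm_num : (0:ℝ) < 1/2)] with m hm
      calc ‖Complex.log (1 + f m)‖ ≤ 3/2 * ‖f m‖ :=
            norm_log_one_add_half_le_self ((hf m).trans hm)
        _ ≤ 3/2 * ‖q‖ ^ (m + 1) := by nlinarith [hf m]
  constructor
  · exact Complex.multipliable_of_summable_log hlog
  · have := Complex.cexp_tsum_eq_tprod hne hlog
    rw [← this]
    exact Complex.exp_ne_zero _


noncomputable def A (q : ℂ) (n : ℕ) : ℂ := ∏' m : ℕ, (1 - q ^ (m + 1 + n))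

noncomputable def Pf (q : ℂ) (n : ℕ) : ℂ := ∏ m ∈ Finset.range n, (1 - q ^ (m + 1))

lemma hf_aux (hq : ‖q‖ < 1) (c : ℕ) (m : ℕ) : ‖-(q ^ (m + 1 + c))‖ ≤ ‖q‖ ^ (m + 1) := by
  rw [norm_neg, norm_pow]
  exact pow_le_pow_of_le_one (norm_nonneg q) hq.le (by omega)

lemma sub_eq_add_neg' (c : ℕ) : (fun m : ℕ => 1 - q ^ (m + 1 + c)) =
    (fun m : ℕ => 1 + -(q ^ (m + 1 + c))) := by
  funext m; ring

lemma multA (hq : ‖q‖ < 1) (c : ℕ) : Multipliable (fun m : ℕ => 1 - q ^ (m + 1 + c)) := by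
  rw [sub_eq_add_neg']
  exact (key hq _ (hf_aux hq c)).1

lemma A_ne_zero (hq : ‖q‖ < 1) (c : ℕ) : A q c ≠ 0 := by
  rw [A, sub_eq_add_neg']
  exact (key hq _ (hf_aux hq c)).2

lemma one_sub_pow_ne (hq : ‖q‖ < 1) {k : ℕ} (hk : 1 ≤ k) : (1 : ℂ) - q ^ k ≠ 0 := by
  have : ‖-(q ^ k)‖ < 1 := by
    rw [norm_neg, norm_pow]
    exact lt_of_le_of_lt (pow_le_of_le_one (norm_nonneg q) hq.le (by omega)) hq
  have := one_add_ne this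
  simpa [sub_eq_add_neg] using this

lemma Pf_ne_zero (hq : ‖q‖ < 1) (n : ℕ) : Pf q n ≠ 0 := by
  rw [Pf]
  exact Finset.prod_ne_zero_iff.2 fun m _ => one_sub_pow_ne hq (by omega)

lemma A_rec (hq : ‖q‖ < 1) (n : ℕ) : A q n = (1 - q ^ (n + 1)) * A q (n + 1) := by
  have hm : Multipliable (fun b : ℕ => (1:ℂ) - q ^ (b + 1 + n + 1)) :=
    (multA hq (n+1)).congr fun b => by ring_nf
  have h := tprod_eq_zero_mul' (f := fun m : ℕ => (1:ℂ) - q ^ (m + 1 + n))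
    (hm.congr fun b => by ring_nf)
  rw [A, h]
  congr 1
  · ring_nf
  · rw [A]
    exact tprod_congr fun m => by ring_nf

lemma Pf_mul_A (hq : ‖q‖ < 1) (n : ℕ) : Pf q n * A q n = A q 0 := by
  induction n with
  | zero => simp [Pf]
  | succ n ih =>
    calc Pf q (n+1) * A q (n+1) = Pf q n * ((1 - q ^ (n+1)) * A q (n+1)) := by
          rw [Pf, Finset.prod_range_succ, ← Pf]; ring
      _ = Pf q n * A q n := by rw [← A_rec hq n]
      _ = A q 0 := ih

lemma A_eq_div (hq : ‖q‖ < 1) (n : ℕ) : A q n = A q 0 / Pf q n := by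
  rw [← Pf_mul_A hq n, mul_comm, mul_div_assoc, div_self (Pf_ne_zero hq n), mul_one]

lemma Pf_tendsto (hq : ‖q‖ < 1) : Tendsto (Pf q) atTop (𝓝 (A q 0)) := by
  have h := (multA hq 0).hasProd.tendsto_prod_nat
  have : A q 0 = ∏' m : ℕ, (1 - q ^ (m + 1 + 0)) := rfl
  rw [this]
  exact h.congr fun n => rfl

lemma A_tendsto (hq : ‖q‖ < 1) : Tendsto (A q) atTop (𝓝 1) := by
  have h : Tendsto (fun n => A q 0 / Pf q n) atTop (𝓝 (A q 0 / A q 0)) :=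
    tendsto_const_nhds.div (Pf_tendsto hq) (A_ne_zero hq 0)
  rw [div_self (A_ne_zero hq 0)] at h
  exact h.congr fun n => (A_eq_div hq n).symm


lemma A_bdd (hq : ‖q‖ < 1) : ∃ C : ℝ, ∀ n, ‖A q n‖ ≤ C := by
  obtain ⟨C, hC⟩ := ((A_tendsto hq).norm).bddAbove_range
  exact ⟨C, fun n => hC ⟨n, rfl⟩⟩

lemma summable_mul_A (hq : ‖q‖ < 1) (r : ℂ) (hr : ‖r‖ ≤ ‖q‖) :
    Summable (fun n => r ^ n * A q n) := by
  obtain ⟨C, hC⟩ := A_bdd hq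
  apply Summable.of_norm_bounded (g := fun n => C * ‖q‖ ^ n)
    (((summable_geometric_of_lt_one (norm_nonneg q) hq)).mul_left C)
  intro n
  rw [norm_mul, norm_pow]
  calc ‖r‖ ^ n * ‖A q n‖ ≤ ‖q‖ ^ n * C := by
        apply mul_le_mul (pow_le_pow_left₀ (norm_nonneg r) hr n) (hC n) (norm_nonneg _)
          (pow_nonneg (norm_nonneg q) n)
    _ = C * ‖q‖ ^ n := mul_comm _ _

lemma sum_teles (hq : ‖q‖ < 1) (N : ℕ) :
    ∑ n ∈ Finset.range (N + 1), q ^ n * A q n = A q N := by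
  induction N with
  | zero => simp
  | succ N ih =>
    rw [Finset.sum_range_succ, ih, A_rec hq N]
    ring

lemma tsum_qA (hq : ‖q‖ < 1) : ∑' n : ℕ, q ^ n * A q n = 1 := by
  have hs := summable_mul_A hq q le_rfl
  have h1 := hs.hasSum.tendsto_sum_nat
  have h2 : Tendsto (fun N => ∑ n ∈ Finset.range (N + 1), q ^ n * A q n) atTop
      (𝓝 (∑' n : ℕ, q ^ n * A q n)) := h1.comp (tendsto_add_atTop_nat 1)
  have h3 : Tendsto (fun N => ∑ n ∈ Finset.range (N + 1), q ^ n * A q n) atTop (𝓝 1) :=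
    (A_tendsto hq).congr fun N => (sum_teles hq N).symm
  exact tendsto_nhds_unique h2 h3


noncomputable def G (q : ℂ) (k : ℕ) : ℂ := ∑' n : ℕ, (-1) ^ n * q ^ (k * n) / Pf q n

lemma invPf_bdd (hq : ‖q‖ < 1) : ∃ C : ℝ, 0 ≤ C ∧ ∀ n, ‖(Pf q n)⁻¹‖ ≤ C := by
  have h : Tendsto (fun n => (Pf q n)⁻¹) atTop (𝓝 (A q 0)⁻¹) :=
    (Pf_tendsto hq).inv₀ (A_ne_zero hq 0)
  obtain ⟨C, hC⟩ := (h.norm).bddAbove_range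
  exact ⟨C, le_trans (norm_nonneg _) (hC ⟨0, rfl⟩), fun n => hC ⟨n, rfl⟩⟩

lemma G_term_norm (hq : ‖q‖ < 1) {C : ℝ} (hC : ∀ n, ‖(Pf q n)⁻¹‖ ≤ C) (k n : ℕ) :
    ‖(-1 : ℂ) ^ n * q ^ (k * n) / Pf q n‖ ≤ C * ‖q‖ ^ (k * n) := by
  rw [div_eq_mul_inv, norm_mul, norm_mul, norm_pow, norm_pow, norm_neg, norm_one, one_pow,
    one_mul]
  calc ‖q‖ ^ (k * n) * ‖(Pf q n)⁻¹‖ ≤ ‖q‖ ^ (k * n) * C :=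
        mul_le_mul_of_nonneg_left (hC n) (pow_nonneg (norm_nonneg q) _)
    _ = C * ‖q‖ ^ (k * n) := mul_comm _ _

lemma summable_G (hq : ‖q‖ < 1) {k : ℕ} (hk : 1 ≤ k) :
    Summable (fun n : ℕ => (-1 : ℂ) ^ n * q ^ (k * n) / Pf q n) := by
  obtain ⟨C, hC0, hC⟩ := invPf_bdd hq
  apply Summable.of_norm_bounded (g := fun n => C * ‖q‖ ^ n)
    ((summable_geometric_of_lt_one (norm_nonneg q) hq).mul_left C)
  intro n
  refine le_trans (G_term_norm hq hC k n) ?_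
  have : ‖q‖ ^ (k * n) ≤ ‖q‖ ^ n :=
    pow_le_pow_of_le_one (norm_nonneg q) hq.le (Nat.le_mul_of_pos_left n hk)
  nlinarith [pow_nonneg (norm_nonneg q) n]

lemma G_succ (hq : ‖q‖ < 1) {k : ℕ} (hk : 1 ≤ k) : G q (k + 1) = (1 + q ^ k) * G q k := by
  set f : ℕ → ℂ := fun n => (-1) ^ n * q ^ (k * n) / Pf q n with hf
  set g : ℕ → ℂ := fun n => (-1) ^ n * q ^ ((k + 1) * n) / Pf q n with hg
  have hsf : Summable f := summable_G hq hk
  have hsg : Summable g := summable_G hq (by omega)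
  have hd : ∀ n : ℕ, f (n + 1) - g (n + 1) = (-q ^ k) * f n := by
    intro n
    have hPf : Pf q (n + 1) = Pf q n * (1 - q ^ (n + 1)) := by
      rw [Pf, Pf, Finset.prod_range_succ]
    rw [hf, hg]
    simp only []
    rw [hPf]
    have h1 : Pf q n ≠ 0 := Pf_ne_zero hq n
    have h2 : (1 : ℂ) - q ^ (n + 1) ≠ 0 := one_sub_pow_ne hq (by omega)
    field_simp
    ring
  have hsum_d : ∑' n, (f n - g n) = G q k - G q (k + 1) := by
    rw [Summable.tsum_sub hsf hsg]; rfl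
  have hd0 : f 0 - g 0 = 0 := by
    rw [hf, hg]; simp [Pf]
  have : ∑' n, (f n - g n) = (-q ^ k) * G q k := by
    rw [Summable.tsum_eq_zero_add (hsf.sub hsg), hd0, zero_add]
    calc ∑' n, (f (n + 1) - g (n + 1)) = ∑' n, (-q ^ k) * f n := by
          exact tsum_congr hd
      _ = (-q ^ k) * G q k := by rw [tsum_mul_left]; rfl
  rw [this] at hsum_d
  linear_combination hsum_d

lemma G_eq (hq : ‖q‖ < 1) (K : ℕ) :
    G q 1 * ∏ k ∈ Finset.range K, (1 + q ^ (k + 1)) = G q (K + 1) := by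
  induction K with
  | zero => simp
  | succ K ih =>
    rw [Finset.prod_range_succ, ← mul_assoc, ih, G_succ hq (by omega : 1 ≤ K + 1)]
    ring


lemma G_sub_one_norm (hq : ‖q‖ < 1) {C : ℝ} (hC0 : 0 ≤ C) (hC : ∀ n, ‖(Pf q n)⁻¹‖ ≤ C)
    {k : ℕ} (hk : 1 ≤ k) :
    ‖G q k - 1‖ ≤ C * ‖q‖ ^ k * (1 - ‖q‖)⁻¹ := by
  have hsf : Summable (fun n : ℕ => (-1 : ℂ) ^ n * q ^ (k * n) / Pf q n) := summable_G hq hk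
  have hf0 : (-1 : ℂ) ^ 0 * q ^ (k * 0) / Pf q 0 = 1 := by simp [Pf]
  have h1 : G q k - 1 = ∑' n : ℕ, (-1 : ℂ) ^ (n + 1) * q ^ (k * (n + 1)) / Pf q (n + 1) := by
    rw [G, Summable.tsum_eq_zero_add hsf, hf0]; ring
  rw [h1]
  have hbound : ∀ n : ℕ, ‖(-1 : ℂ) ^ (n + 1) * q ^ (k * (n + 1)) / Pf q (n + 1)‖
      ≤ C * ‖q‖ ^ k * ‖q‖ ^ n := by
    intro n
    refine le_trans (G_term_norm hq hC k (n + 1)) ?_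
    rw [mul_assoc, ← pow_add]
    refine mul_le_mul_of_nonneg_left ?_ hC0
    refine pow_le_pow_of_le_one (norm_nonneg q) hq.le ?_
    have h2 : k * (n + 1) = k * n + k := by ring
    have h3 : 1 * n ≤ k * n := Nat.mul_le_mul_right n hk
    omega
  have hsg : Summable (fun n : ℕ => C * ‖q‖ ^ k * ‖q‖ ^ n) :=
    (summable_geometric_of_lt_one (norm_nonneg q) hq).mul_left _
  have hsn : Summable (fun n : ℕ => ‖(-1 : ℂ) ^ (n + 1) * q ^ (k * (n + 1)) / Pf q (n + 1)‖) :=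
    Summable.of_nonneg_of_le (fun n => norm_nonneg _) hbound hsg
  calc ‖∑' n : ℕ, (-1 : ℂ) ^ (n + 1) * q ^ (k * (n + 1)) / Pf q (n + 1)‖
      ≤ ∑' n : ℕ, ‖(-1 : ℂ) ^ (n + 1) * q ^ (k * (n + 1)) / Pf q (n + 1)‖ :=
        norm_tsum_le_tsum_norm hsn
    _ ≤ ∑' n : ℕ, C * ‖q‖ ^ k * ‖q‖ ^ n := Summable.tsum_le_tsum hbound hsn hsg
    _ = C * ‖q‖ ^ k * (1 - ‖q‖)⁻¹ := by
        rw [tsum_mul_left, tsum_geometric_of_lt_one (norm_nonneg q) hq]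

lemma multR (hq : ‖q‖ < 1) : Multipliable (fun k : ℕ => 1 + q ^ (k + 1)) :=
  (key hq _ (fun m => by rw [norm_pow])).1

lemma GR (hq : ‖q‖ < 1) : G q 1 * ∏' k : ℕ, (1 + q ^ (k + 1)) = 1 := by
  obtain ⟨C, hC0, hC⟩ := invPf_bdd hq
  have h1 : Tendsto (fun K => G q 1 * ∏ k ∈ Finset.range K, (1 + q ^ (k + 1))) atTop
      (𝓝 (G q 1 * ∏' k : ℕ, (1 + q ^ (k + 1)))) :=
    tendsto_const_nhds.mul (multR hq).hasProd.tendsto_prod_nat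
  have hgeom : Tendsto (fun K : ℕ => C * ‖q‖ ^ (K + 1) * (1 - ‖q‖)⁻¹) atTop (𝓝 0) := by
    have := (tendsto_pow_atTop_nhds_zero_of_lt_one (norm_nonneg q) hq).const_mul
      (C * (1 - ‖q‖)⁻¹ * ‖q‖)
    rw [mul_zero] at this
    exact this.congr fun K => by rw [pow_succ]; ring
  have h3 : Tendsto (fun K : ℕ => G q (K + 1) - 1) atTop (𝓝 0) :=
    squeeze_zero_norm (fun K => G_sub_one_norm hq hC0 hC (k := K + 1) (by omega)) hgeom
  have h2 : Tendsto (fun K : ℕ => G q (K + 1)) atTop (𝓝 1) := by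
    have := h3.add_const 1
    rw [zero_add] at this
    exact this.congr fun K => by ring
  exact tendsto_nhds_unique (h1.congr fun K => G_eq hq K) h2

lemma tsum_negqA (hq : ‖q‖ < 1) : ∑' n : ℕ, (-q) ^ n * A q n = A q 0 * G q 1 := by
  have h : ∀ n : ℕ, (-q) ^ n * A q n = A q 0 * ((-1) ^ n * q ^ (1 * n) / Pf q n) := by
    intro n
    rw [A_eq_div hq n, neg_pow, one_mul]
    ring
  rw [tsum_congr h, tsum_mul_left, ← G]

end Stmt15

/-- For `|q| < 1`, `F_{S_{1,2}}(q) = (1/2)(1 - (q;q)_∞² / (q²;q²)_∞)`. -/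
theorem stmt15 (q : ℂ) (hq : ‖q‖ < 1) :
    (∑' n : ℕ, if Odd n then q ^ n * ∏' m : ℕ, (1 - q ^ (m + 1 + n)) else 0) =
      (1 / 2) * (1 - (∏' n : ℕ, (1 - q ^ (n + 1))) ^ 2 /
        ∏' n : ℕ, (1 - q ^ (2 * (n + 1)))) := by
  open Stmt15 in
  have hA0 : (∏' n : ℕ, (1 - q ^ (n + 1))) = Stmt15.A q 0 := rfl
  have hGR := Stmt15.GR hq
  have hR : (∏' k : ℕ, (1 + q ^ (k + 1))) ≠ 0 := by
    intro h; rw [h, mul_zero] at hGR; exact zero_ne_one hGR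
  have hQ : (∏' n : ℕ, (1 - q ^ (2 * (n + 1))))
      = Stmt15.A q 0 * ∏' k : ℕ, (1 + q ^ (k + 1)) := by
    calc (∏' n : ℕ, (1 - q ^ (2 * (n + 1))))
        = ∏' n : ℕ, ((1 - q ^ (n + 1 + 0)) * (1 + q ^ (n + 1))) := tprod_congr fun n => by ring
      _ = (∏' n : ℕ, (1 - q ^ (n + 1 + 0))) * ∏' n : ℕ, (1 + q ^ (n + 1)) :=
          Multipliable.tprod_mul (Stmt15.multA hq 0) (Stmt15.multR hq)
      _ = Stmt15.A q 0 * ∏' k : ℕ, (1 + q ^ (k + 1)) := rfl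
  have hpoint : ∀ n : ℕ, (if Odd n then q ^ n * Stmt15.A q n else 0)
      = (1 / 2 : ℂ) * (q ^ n * Stmt15.A q n - (-q) ^ n * Stmt15.A q n) := by
    intro n
    rcases Nat.even_or_odd n with he | ho
    · rw [if_neg (Nat.not_odd_iff_even.mpr he), Even.neg_pow he]; ring
    · rw [if_pos ho, Odd.neg_pow ho]; ring
  calc (∑' n : ℕ, if Odd n then q ^ n * Stmt15.A q n else 0)
      = ∑' n : ℕ, (1 / 2 : ℂ) * (q ^ n * Stmt15.A q n - (-q) ^ n * Stmt15.A q n) :=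
        tsum_congr hpoint
    _ = (1 / 2) * ((∑' n : ℕ, q ^ n * Stmt15.A q n) - ∑' n : ℕ, (-q) ^ n * Stmt15.A q n) := by
        rw [tsum_mul_left, Summable.tsum_sub (Stmt15.summable_mul_A hq q le_rfl)
          (Stmt15.summable_mul_A hq (-q) (by rw [norm_neg]))]
    _ = (1 / 2) * (1 - Stmt15.A q 0 * Stmt15.G q 1) := by
        rw [Stmt15.tsum_qA hq, Stmt15.tsum_negqA hq]
    _ = (1 / 2) * (1 - (∏' n : ℕ, (1 - q ^ (n + 1))) ^ 2 /
        ∏' n : ℕ, (1 - q ^ (2 * (n + 1)))) := by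
        rw [hA0, hQ]
        have hA0ne := Stmt15.A_ne_zero hq 0
        have : Stmt15.A q 0 ^ 2 / (Stmt15.A q 0 * ∏' k : ℕ, (1 + q ^ (k + 1)))
            = Stmt15.A q 0 * Stmt15.G q 1 := by
          field_simp
          linear_combination (-1 : ℂ) * hGR
        rw [this]
end

section
/- For every complex number q with |q| < 1, one has ∑_{n=1}^∞ q^n ∏_{m=1}^∞ (1 − q^{m+n}) = 1 − ∏_{n=1}^∞ (1 − q^n); equivalently, F_{S_{1,2}}(q) + F_{S_{2,2}}(q) = 1 − (q;q)_∞. -/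
/-- For `|q| < 1`, `∑_{n ≥ 1} qⁿ ∏_{m=1}^∞ (1 - q^{m+n}) = 1 - (q;q)_∞`; equivalently
`F_{S_{1,2}}(q) + F_{S_{2,2}}(q) = 1 - (q;q)_∞`. -/
theorem stmt16 (q : ℂ) (hq : ‖q‖ < 1) :
    ∑' n : ℕ, q ^ (n + 1) * ∏' m : ℕ, (1 - q ^ (m + 1 + (n + 1))) =
      1 - ∏' n : ℕ, (1 - q ^ (n + 1)) := by
  -- basic facts
  have hqn : ∀ k : ℕ, ‖q ^ (k + 1)‖ < 1 := by
    intro k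
    rw [norm_pow]
    exact pow_lt_one₀ (norm_nonneg q) hq (Nat.succ_ne_zero k)
  have hne : ∀ k : ℕ, (1 : ℂ) - q ^ (k + 1) ≠ 0 := by
    intro k h
    have : ‖(1 : ℂ)‖ ≤ ‖q ^ (k + 1)‖ := by
      have : (1 : ℂ) = q ^ (k + 1) := by linear_combination h
      rw [this]
    simp only [norm_one] at this
    exact absurd (hqn k) (not_lt.mpr this)
  -- summability of the logs
  have hlog : ∀ n : ℕ, Summable fun m : ℕ => Complex.log (1 - q ^ (m + 1 + n)) := by
    have base : Summable fun m : ℕ => Complex.log (1 - q ^ (m + 1)) := by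
      apply Summable.of_norm_bounded_eventually_nat (g := fun m => (3 / 2 : ℝ) * ‖q‖ ^ (m + 1))
      · exact (summable_geometric_of_lt_one (norm_nonneg q) hq).mul_left _ |>.comp_injective
          (add_left_injective 1)
      · have h0 : Filter.Tendsto (fun m : ℕ => ‖q‖ ^ (m + 1)) Filter.atTop (nhds 0) := by
          exact
            ((tendsto_pow_atTop_nhds_zero_of_lt_one (norm_nonneg q) hq).comp
              (Filter.tendsto_add_atTop_nat 1))
        filter_upwards [h0.eventually_le_const (by norm_num : (0:ℝ) < 1/2)] with m hm
        have := Complex.norm_log_one_add_half_le_self (z := -q ^ (m + 1))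
          (by simpa using hm)
        simpa [sub_eq_add_neg] using this
    intro n
    have := (summable_nat_add_iff (f := fun m : ℕ => Complex.log (1 - q ^ (m + 1))) n).2 base
    apply this.congr
    intro m
    rw [show m + n + 1 = m + 1 + n by omega]
  -- multipliability and the tail products
  set T : ℕ → ℂ := fun n => ∏' m : ℕ, (1 - q ^ (m + 1 + n)) with hT
  have hM : ∀ n : ℕ, Multipliable fun m : ℕ => (1 - q ^ (m + 1 + n)) := by
    intro n
    exact Complex.multipliable_of_summable_log (hlog n)
  have hTexp : ∀ n : ℕ, T n = Complex.exp (∑' m : ℕ, Complex.log (1 - q ^ (m + 1 + n))) := by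
    intro n
    have := Complex.cexp_tsum_eq_tprod (f := fun m => 1 - q ^ (m + 1 + n))
      (fun m => by simpa [show m + 1 + n = m + n + 1 from by omega] using hne (m + n)) (hlog n)
    exact this.symm
  have hTne : ∀ n : ℕ, T n ≠ 0 := fun n => by
    rw [hTexp n]; exact Complex.exp_ne_zero _
  -- recurrence : T n = (1 - q^(n+1)) * T (n+1)
  have hrec : ∀ n : ℕ, T n = (1 - q ^ (n + 1)) * T (n + 1) := by
    intro n
    have hm' : Multipliable fun m : ℕ => (1 - q ^ (m + 1 + 1 + n)) :=
      (hM (n + 1)).congr fun m => by rw [show m + 1 + (n + 1) = m + 1 + 1 + n by omega]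
    have h1 : (∏' m : ℕ, (1 - q ^ (m + 1 + n)))
        = (1 - q ^ (0 + 1 + n)) * ∏' m : ℕ, (1 - q ^ (m + 1 + 1 + n)) :=
      tprod_eq_zero_mul' (f := fun m : ℕ => (1 - q ^ (m + 1 + n))) hm'
    have h2 : (∏' m : ℕ, (1 - q ^ (m + 1 + 1 + n))) = T (n + 1) := by
      apply tprod_congr
      intro m
      congr 2
      omega
    show (∏' m : ℕ, (1 - q ^ (m + 1 + n))) = _
    rw [h1, h2]
    norm_num [add_comm]
  -- partial products tend to T 0, so T N → 1
  have hP : Filter.Tendsto (fun N => ∏ i ∈ Finset.range N, (1 - q ^ (i + 1)))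
      Filter.atTop (nhds (T 0)) := by
    have := (hM 0).hasProd.tendsto_prod_nat
    simpa using this
  have hTN : ∀ N : ℕ, T N = T 0 / ∏ i ∈ Finset.range N, (1 - q ^ (i + 1)) := by
    intro N
    have hPne : (∏ i ∈ Finset.range N, (1 - q ^ (i + 1))) ≠ 0 :=
      Finset.prod_ne_zero_iff.mpr fun i _ => hne i
    rw [eq_div_iff hPne, mul_comm]
    have hmN : Multipliable fun m : ℕ => (1 - q ^ (m + N + 1)) :=
      (hM N).congr fun m => by rw [show m + 1 + N = m + N + 1 by omega]
    have := Multipliable.prod_mul_tprod_nat_mul' (f := fun m : ℕ => (1 - q ^ (m + 1))) (k := N) hmN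
    have h2 : (∏' m : ℕ, (1 - q ^ (m + N + 1))) = T N := by
      apply tprod_congr
      intro m
      congr 2
      omega
    calc (∏ i ∈ Finset.range N, (1 - q ^ (i + 1))) * T N
        = (∏ i ∈ Finset.range N, (1 - q ^ (i + 1))) * ∏' m : ℕ, (1 - q ^ (m + N + 1)) := by
          rw [h2]
      _ = ∏' m : ℕ, (1 - q ^ (m + 1)) := by
          simpa using this
      _ = T 0 := by
          apply tprod_congr; intro m; congr 2
  have hT1 : Filter.Tendsto T Filter.atTop (nhds 1) := by
    have : Filter.Tendsto (fun N => T 0 / ∏ i ∈ Finset.range N, (1 - q ^ (i + 1)))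
        Filter.atTop (nhds (T 0 / T 0)) := Filter.Tendsto.div tendsto_const_nhds hP (hTne 0)
    rw [div_self (hTne 0)] at this
    exact this.congr fun N => (hTN N).symm
  -- the summand is a telescoping difference
  have htel : ∀ n : ℕ, q ^ (n + 1) * T (n + 1) = T (n + 1) - T n := by
    intro n
    rw [hrec n]
    ring
  -- summability of the series
  have hbdd : ∃ C : ℝ, ∀ n : ℕ, ‖T n‖ ≤ C := by
    obtain ⟨C, hC⟩ := (hT1.norm.bddAbove_range)
    exact ⟨C, fun n => hC ⟨n, rfl⟩⟩
  obtain ⟨C, hC⟩ := hbdd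
  have hsum : Summable fun n : ℕ => q ^ (n + 1) * T (n + 1) := by
    apply Summable.of_norm_bounded (g := fun n => C * ‖q‖ ^ (n + 1))
    · exact ((summable_geometric_of_lt_one (norm_nonneg q) hq).mul_left C).comp_injective
        (add_left_injective 1)
    · intro n
      rw [norm_mul, norm_pow]
      calc ‖q‖ ^ (n + 1) * ‖T (n + 1)‖ ≤ ‖q‖ ^ (n + 1) * C :=
            mul_le_mul_of_nonneg_left (hC (n + 1)) (by positivity)
        _ = C * ‖q‖ ^ (n + 1) := mul_comm _ _
  -- compute the sum via partial sums
  have hps : Filter.Tendsto (fun N => ∑ n ∈ Finset.range N, q ^ (n + 1) * T (n + 1))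
      Filter.atTop (nhds (1 - T 0)) := by
    have heq : ∀ N : ℕ, ∑ n ∈ Finset.range N, q ^ (n + 1) * T (n + 1) = T N - T 0 := by
      intro N
      calc ∑ n ∈ Finset.range N, q ^ (n + 1) * T (n + 1)
          = ∑ n ∈ Finset.range N, (T (n + 1) - T n) := Finset.sum_congr rfl fun n _ => htel n
        _ = T N - T 0 := Finset.sum_range_sub T N
    have : Filter.Tendsto (fun N => T N - T 0) Filter.atTop (nhds (1 - T 0)) :=
      hT1.sub tendsto_const_nhds
    exact this.congr fun N => (heq N).symm
  have hval : (∑' n : ℕ, q ^ (n + 1) * T (n + 1)) = 1 - T 0 :=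
    tendsto_nhds_unique hsum.hasSum.tendsto_sum_nat hps
  -- finish
  have hL : (∑' n : ℕ, q ^ (n + 1) * ∏' m : ℕ, (1 - q ^ (m + 1 + (n + 1))))
      = ∑' n : ℕ, q ^ (n + 1) * T (n + 1) := rfl
  have hR : (∏' n : ℕ, (1 - q ^ (n + 1))) = T 0 := by
    apply tprod_congr; intro n; congr 2
  rw [hL, hR, hval]
end
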